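/- arXiv:2502.11795 — 5 statements merged into one kernel-verified Lean document; each statement's English description precedes it below -/
import Mathlib

section
/- Let η, ε : F ⊣ U : A → X be an adjunction between categories, let T = (T, μ, η^T) be a monad on X, and let K : A → X^T be a functor into the Eilenberg–Moore category of T-algebras satisfying U^T ∘ K = U. Let S = (UF, UεF, η) be the monad on X generated by the adjunction F ⊣ U, and let s_K : T → S be the induced monad morphism, namely s_K = U^T γ_K where γ_K is the composite F^T → F^T U F = F^T U^T K F → K F given by (ε^T K F) ∘ (F^T η). Then K is an equivalence of categories if and only if (i) U is monadic and (ii) s_K is an isomorphism of monads. -/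
/-!
STATEMENT 0 (Comparison theorem).
Given an adjunction `adj : F ⊣ U : A → X`, a monad `T` on `X`, and a functor
`K : A ⥤ X^T` into the Eilenberg–Moore category with `U^T ∘ K = U`,
the functor `K` is an equivalence iff `U` is monadic and the induced monad
morphism `s_K : T ⟶ S` (where `S` is the monad generated by `F ⊣ U`) is an
isomorphism.  The `x`-component of `s_K` is
`U^T (ε^T_{K(Fx)}) ∘ U^T (F^T η_x) = (K (F x)).a ∘ T(η_x)` (up to the
identifications provided by `U^T ∘ K = U`), and a morphism of monads is an
isomorphism of monads precisely if each component is an isomorphism.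
-/

open CategoryTheory

universe v₁ v₂ u₁ u₂

namespace ComparisonAux

variable {X : Type u₁} [Category.{v₁} X] {A : Type u₂} [Category.{v₂} A]
    {F : X ⥤ A} {U : A ⥤ X} (adj : F ⊣ U)
    {T : Monad X} (K : A ⥤ T.Algebra)
    (hU : K ⋙ T.forget = U)

/-- The carrier identification. -/
abbrev eA (a : A) : (K.obj a).A = U.obj a := Functor.congr_obj hU a

/-- The structure map transported to `U.obj a`. -/
def kmap (a : A) : (T : X ⥤ X).obj (U.obj a) ⟶ U.obj a :=
  eqToHom (congrArg (T : X ⥤ X).obj (eA K hU a).symm) ≫ (K.obj a).a ≫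
    eqToHom (eA K hU a)

lemma kmap_subst (a : A) :
    kmap K rfl a = (K.obj a).a := by
  simp only [kmap]
  show eqToHom rfl ≫ (K.obj a).a ≫ eqToHom rfl = _
  simp

lemma k_unit (a : A) : T.η.app (U.obj a) ≫ kmap K hU a = 𝟙 _ := by
  subst hU; rw [kmap_subst]; exact (K.obj a).unit

lemma k_assoc (a : A) :
    (T : X ⥤ X).map (kmap K hU a) ≫ kmap K hU a =
      T.μ.app (U.obj a) ≫ kmap K hU a := by
  subst hU; rw [kmap_subst]; exact (K.obj a).assoc.symm

lemma k_hom {a b : A} (g : a ⟶ b) :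
    (T : X ⥤ X).map (U.map g) ≫ kmap K hU b = kmap K hU a ≫ U.map g := by
  subst hU; rw [kmap_subst, kmap_subst]; exact (K.map g).h

end ComparisonAux

namespace ComparisonAux2
open ComparisonAux

variable {X : Type u₁} [Category.{v₁} X] {A : Type u₂} [Category.{v₂} A]
    {F : X ⥤ A} {U : A ⥤ X} (adj : F ⊣ U)
    {T : Monad X} (K : A ⥤ T.Algebra)
    (hU : K ⋙ T.forget = U)

/-- The induced monad morphism `s_K : T ⟶ S`. -/
def sigma : T ⟶ adj.toMonad where
  app x := (T : X ⥤ X).map (adj.unit.app x) ≫ kmap K hU (F.obj x)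
  naturality x y g := by
    dsimp [Adjunction.toMonad]
    rw [← Functor.map_comp_assoc, ← adj.unit_naturality g, Functor.map_comp_assoc,
      Category.assoc, ← k_hom K hU (F.map g)]
  app_η x := by
    have := T.η.naturality (adj.unit.app x)
    dsimp [Adjunction.toMonad] at this ⊢
    rw [← Category.assoc, ← this, Category.assoc, k_unit K hU]
    simp
  app_μ x := by
    have h1 := T.μ.naturality (adj.unit.app x)
    dsimp [Adjunction.toMonad] at h1 ⊢
    rw [← Category.assoc, ← h1, Category.assoc, ← k_assoc K hU]
    -- LHS now: T.map (T.map (adj.unit.app x)) ≫ T.map (kmap _) ≫ kmap _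
    rw [← Functor.map_comp_assoc]
    -- RHS side computation
    have h2 : (T : X ⥤ X).map (adj.unit.app (U.obj (F.obj x))) ≫ kmap K hU (F.obj (U.obj (F.obj x))) ≫
        U.map (adj.counit.app (F.obj x)) = kmap K hU (F.obj x) := by
      have h3 := k_hom K hU (adj.counit.app (F.obj x))
      dsimp at h3
      rw [← h3, ← Functor.map_comp_assoc,
        adj.right_triangle_components]
      simp
    rw [Category.assoc, Category.assoc, h2]

end ComparisonAux2

namespace ComparisonAux3
open ComparisonAux ComparisonAux2

variable {X : Type u₁} [Category.{v₁} X] {A : Type u₂} [Category.{v₂} A]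
    {F : X ⥤ A} {U : A ⥤ X} (adj : F ⊣ U)
    {T : Monad X} (K : A ⥤ T.Algebra)
    (hU : K ⋙ T.forget = U)

lemma sigma_counit (a : A) :
    (sigma adj K hU).app (U.obj a) ≫ U.map (adj.counit.app a) = kmap K hU a := by
  dsimp [sigma, Adjunction.toMonad]
  have h3 := k_hom K hU (adj.counit.app a)
  dsimp at h3
  rw [Category.assoc, ← h3, ← Functor.map_comp_assoc, adj.right_triangle_components]
  simp

/-- `K` is isomorphic to the comparison functor composed with the functor induced by `s_K`. -/
def compIso :
    K ≅ Monad.comparison adj ⋙ Monad.algebraFunctorOfMonadHom (sigma adj K hU) :=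
  NatIso.ofComponents
    (fun a => Monad.Algebra.isoMk (eqToIso (eA K hU a)) (by
      dsimp
      simp only [Monad.algebraFunctorOfMonadHom_obj_a, Monad.comparison_obj_a]
      erw [sigma_counit adj K hU a]
      subst hU
      simp [kmap_subst]
      show (T : X ⥤ X).map (𝟙 _) ≫ (K.obj a).a = (K.obj a).a ≫ 𝟙 _
      simp))
    (fun {a b} g => by
      ext
      subst hU
      simp
      exact (Category.comp_id _).trans (Category.id_comp _).symm)

lemma isIso_sigma (h : ∀ x, IsIso ((sigma adj K hU).app x)) :
    IsIso (sigma adj K hU) := by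
  haveI : ∀ x, IsIso (((monadToFunctor X).map (sigma adj K hU)).app x) := h
  haveI : IsIso ((monadToFunctor X).map (sigma adj K hU)) :=
    NatIso.isIso_of_isIso_app _
  exact isIso_of_reflects_iso _ (monadToFunctor X)

lemma G_equiv [IsIso (sigma adj K hU)] :
    (Monad.algebraFunctorOfMonadHom (sigma adj K hU)).IsEquivalence :=
  inferInstanceAs
    ((Monad.algebraEquivOfIsoMonads (asIso (sigma adj K hU)).symm).functor.IsEquivalence)

/-- Bridging monad iso between two adjunctions for `U`. -/
def rhoIso [MonadicRightAdjoint U] : adj.toMonad ≅ (monadicAdjunction U).toMonad :=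
  MonadIso.mk (Functor.isoWhiskerRight (Adjunction.leftAdjointUniq (monadicAdjunction U) adj).symm U)
    (fun x => by
      dsimp [Adjunction.toMonad]
      rw [Adjunction.leftAdjointUniq_inv_app]
      exact Adjunction.unit_leftAdjointUniq_hom_app adj (monadicAdjunction U) x)
    (fun x => by
      dsimp [Adjunction.toMonad]
      rw [← U.map_comp, Category.assoc, ← U.map_comp, ← U.map_comp]
      congr 1
      simp only [Adjunction.leftAdjointUniq_inv_app]
      rw [Adjunction.leftAdjointUniq_hom_app_counit adj (monadicAdjunction U),
        adj.counit_naturality])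

def comparisonIso [MonadicRightAdjoint U] :
    Monad.comparison adj ≅
      Monad.comparison (monadicAdjunction U) ⋙
        Monad.algebraFunctorOfMonadHom (rhoIso adj).hom :=
  NatIso.ofComponents
    (fun a => Monad.Algebra.isoMk (Iso.refl _) (by
      dsimp [rhoIso]
      show U.map (F.map (𝟙 (U.obj a))) ≫
          U.map ((Adjunction.leftAdjointUniq (monadicAdjunction U) adj).inv.app (U.obj a)) ≫
            U.map ((monadicAdjunction U).counit.app a) = U.map (adj.counit.app a) ≫ 𝟙 _
      rw [Adjunction.leftAdjointUniq_inv_app, ← U.map_comp,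
        Adjunction.leftAdjointUniq_hom_app_counit adj (monadicAdjunction U)]
      simp))
    (fun {a b} g => by
      ext; simp
      exact (Category.comp_id _).trans (Category.id_comp _).symm)

lemma comparison_isEquivalence [MonadicRightAdjoint U] :
    (Monad.comparison adj).IsEquivalence := by
  haveI : (Monad.algebraFunctorOfMonadHom (rhoIso adj).hom).IsEquivalence :=
    inferInstanceAs ((Monad.algebraEquivOfIsoMonads (rhoIso adj).symm).functor.IsEquivalence)
  exact Functor.isEquivalence_of_iso (comparisonIso adj).symm

lemma free_hom_eq {x : X} {B : T.Algebra} (g : T.free.obj x ⟶ B) :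
    g.f = (T : X ⥤ X).map (T.η.app x ≫ g.f) ≫ B.a := by
  erw [Functor.map_comp, Category.assoc, g.h]
  have : (T.free.obj x).a = T.μ.app x := rfl
  erw [this, ← Category.assoc, T.right_unit x, Category.id_comp]

lemma monad_adj_unit (x : X) : T.adj.unit.app x = T.η.app x := by
  simp [Monad.adj]
  exact Category.comp_id _

end ComparisonAux3

namespace ComparisonAux4
open ComparisonAux ComparisonAux2 ComparisonAux3

variable {X : Type u₁} [Category.{v₁} X] {A : Type u₂} [Category.{v₂} A]
    {F : X ⥤ A} {U : A ⥤ X} (adj : F ⊣ U)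
    {T : Monad X} (K : A ⥤ T.Algebra)
    (hU : K ⋙ T.forget = U)

lemma ofNatIsoRight_unit_app {C : Type*} [Category C] {D : Type*} [Category D]
    {F' : C ⥤ D} {G' H' : D ⥤ C} (adj' : F' ⊣ G') (i : G' ≅ H') (x : C) :
    (adj'.ofNatIsoRight i).unit.app x = adj'.unit.app x ≫ i.hom.app _ := by
  simp [Adjunction.ofNatIsoRight, Adjunction.mkOfHomEquiv, Adjunction.homEquiv_unit]

lemma isIso_sigma_app [K.IsEquivalence] (x : X) :
    IsIso ((sigma adj K hU).app x) := by
  subst hU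
  let e : A ≌ T.Algebra := K.asEquivalence
  let ψ : e.inverse ⋙ (K ⋙ T.forget) ≅ T.forget :=
    NatIso.ofComponents (fun B => T.forget.mapIso (e.counitIso.app B))
      (fun {B B'} g => by
        exact congrArg Monad.Algebra.Hom.f (e.counit.naturality g))
  let adj2 : (F ⋙ K) ⊣ T.forget := (adj.comp e.toAdjunction).ofNatIsoRight ψ
  let γ : T.free ⟶ F ⋙ K := (conjugateEquiv adj2 T.adj).symm (𝟙 T.forget)
  haveI : IsIso γ := conjugateEquiv_symm_iso adj2 T.adj (𝟙 T.forget)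
  haveI : IsIso (γ.app x) := inferInstance
  haveI hf : IsIso ((γ.app x).f) := inferInstanceAs (IsIso (T.forget.map (γ.app x)))
  have hγ : adj2.unit.app x = T.η.app x ≫ (γ.app x).f := by
    have h := unit_conjugateEquiv_symm adj2 T.adj (𝟙 T.forget) x
    rw [monad_adj_unit] at h
    exact ((Category.comp_id (adj2.unit.app x)).symm.trans h)
  have hunit : adj2.unit.app x = adj.unit.app x := by
    have h1 : adj2.unit.app x =
        (adj.comp e.toAdjunction).unit.app x ≫ ψ.hom.app ((F ⋙ K).obj x) :=
      ofNatIsoRight_unit_app _ ψ x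
    rw [h1, Adjunction.comp_unit_app]
    dsimp [ψ]
    have h2 : K.map (e.unit.app (F.obj x)) ≫ e.counitIso.hom.app (K.obj (F.obj x)) =
        𝟙 _ := e.functor_unit_comp (F.obj x)
    erw [Category.assoc, ← Monad.Algebra.comp_f, h2]
    simp
    exact Category.comp_id _
  have key : (sigma adj K rfl).app x = (γ.app x).f := by
    have hfree := free_hom_eq (γ.app x)
    dsimp [sigma]
    rw [kmap_subst, hfree, ← hγ, hunit]
    rfl
  rw [key]
  exact hf

end ComparisonAux4

theorem comparison_theorem
    {X : Type u₁} [Category.{v₁} X] {A : Type u₂} [Category.{v₂} A]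
    (F : X ⥤ A) (U : A ⥤ X) (adj : F ⊣ U)
    (T : Monad X) (K : A ⥤ T.Algebra)
    (hU : K ⋙ T.forget = U) :
    K.IsEquivalence ↔
      (Nonempty (MonadicRightAdjoint U) ∧
        ∀ x : X,
          IsIso ((T : X ⥤ X).map (adj.unit.app x) ≫
            eqToHom (congrArg (T : X ⥤ X).obj (Functor.congr_obj hU (F.obj x)).symm) ≫
            (K.obj (F.obj x)).a ≫ eqToHom (Functor.congr_obj hU (F.obj x)))) := by
  constructor
  · intro hK
    haveI := hK
    have hs : ∀ x, IsIso ((ComparisonAux2.sigma adj K hU).app x) := fun x => ComparisonAux4.isIso_sigma_app adj K hU x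
    haveI := ComparisonAux3.isIso_sigma adj K hU hs
    haveI hG := ComparisonAux3.G_equiv adj K hU
    haveI : (Monad.comparison adj ⋙
        Monad.algebraFunctorOfMonadHom (ComparisonAux2.sigma adj K hU)).IsEquivalence :=
      Functor.isEquivalence_of_iso (ComparisonAux3.compIso adj K hU)
    have hC : (Monad.comparison adj).IsEquivalence :=
      Functor.isEquivalence_of_comp_right _
        (Monad.algebraFunctorOfMonadHom (ComparisonAux2.sigma adj K hU))
    exact ⟨⟨{ L := F, adj := adj, eqv := hC }⟩, fun x => hs x⟩
  · rintro ⟨⟨M⟩, hs⟩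
    haveI := M
    have hs' : ∀ x, IsIso ((ComparisonAux2.sigma adj K hU).app x) := fun x => hs x
    haveI := ComparisonAux3.isIso_sigma adj K hU hs'
    haveI hG := ComparisonAux3.G_equiv adj K hU
    haveI hC := ComparisonAux3.comparison_isEquivalence adj
    exact Functor.isEquivalence_of_iso (ComparisonAux3.compIso adj K hU).symm
end

section
/- Let Q be a quantaloid, let Q be an object of Q such that all set-indexed copowers Q^(X) (coproducts of X copies of Q) exist in Q, and let E = Hom_Q(Q,Q) be the endomorphism quantale of Q (composition as multiplication, identity as unit). Then the functor K^Q : Q → Mod_E(Sl) sending an object A to the right E-module Hom_Q(Q,A) (with E-action given by composition) is an equivalence of categories if and only if the hom-functor Q(Q,−) : Q → Set is monadic. -/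
open CategoryTheory Set

universe u v w

class UQuantale (A : Type u) extends CompleteLattice A, Monoid A where
  mul_sSup : ∀ (a : A) (s : Set A), a * sSup s = ⨆ b ∈ s, a * b
  sSup_mul : ∀ (s : Set A) (b : A), sSup s * b = ⨆ a ∈ s, a * b

namespace UQuantale
variable {A : Type u} [UQuantale A]

theorem mul_iSup {ι : Sort w} (a : A) (f : ι → A) : a * (⨆ i, f i) = ⨆ i, a * f i := by
  rw [iSup, mul_sSup]; exact iSup_range

theorem iSup_mul {ι : Sort w} (f : ι → A) (b : A) : (⨆ i, f i) * b = ⨆ i, f i * b := by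
  rw [iSup, sSup_mul]; exact iSup_range

theorem mul_bot (a : A) : a * (⊥ : A) = ⊥ := by
  have := mul_sSup a (∅ : Set A); simpa using this

theorem bot_mul (a : A) : (⊥ : A) * a = ⊥ := by
  have := sSup_mul (∅ : Set A) a; simpa using this

end UQuantale

structure QMod (A : Type u) [UQuantale A] : Type (max u (v + 1)) where
  carrier : Type v
  [latt : CompleteLattice carrier]
  act : carrier → A → carrier
  act_one : ∀ m, act m 1 = m
  act_mul : ∀ m a b, act m (a * b) = act (act m a) b
  sSup_act : ∀ (s : Set carrier) (a : A), act (sSup s) a = ⨆ m ∈ s, act m a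
  act_sSup : ∀ (m : carrier) (s : Set A), act m (sSup s) = ⨆ a ∈ s, act m a

attribute [instance] QMod.latt

namespace QMod

variable {A : Type u} [UQuantale A]

def IsHom (M N : QMod.{u, v} A) (f : M.carrier → N.carrier) : Prop :=
  (∀ s : Set M.carrier, f (sSup s) = ⨆ m ∈ s, f m) ∧
  (∀ m a, f (M.act m a) = N.act (f m) a)

theorem isHom_id (M : QMod.{u, v} A) : IsHom M M id :=
  ⟨fun s => by simp [sSup_eq_iSup], fun _ _ => rfl⟩

theorem isHom_comp {M N P : QMod.{u, v} A} {f : M.carrier → N.carrier}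
    {g : N.carrier → P.carrier} (hf : IsHom M N f) (hg : IsHom N P g) :
    IsHom M P (g ∘ f) := by
  constructor
  · intro s
    show g (f (sSup s)) = _
    rw [hf.1 s, ← sSup_image, hg.1, iSup_image]
    rfl
  · intro m a
    show g (f (M.act m a)) = _
    rw [hf.2, hg.2]
    rfl

instance : Category.{v} (QMod.{u, v} A) where
  Hom M N := { f : M.carrier → N.carrier // IsHom M N f }
  id M := ⟨id, isHom_id M⟩
  comp f g := ⟨g.1 ∘ f.1, isHom_comp f.2 g.2⟩
  id_comp _ := Subtype.ext rfl
  comp_id _ := Subtype.ext rfl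
  assoc _ _ _ := Subtype.ext rfl

theorem iSup_act (M : QMod.{u, v} A) {ι : Sort w} (g : ι → M.carrier) (a : A) :
    M.act (⨆ i, g i) a = ⨆ i, M.act (g i) a := by
  rw [iSup, M.sSup_act]; exact iSup_range

theorem act_iSup (M : QMod.{u, v} A) (m : M.carrier) {ι : Sort w} (g : ι → A) :
    M.act m (⨆ i, g i) = ⨆ i, M.act m (g i) := by
  rw [iSup, M.act_sSup]; exact iSup_range

theorem hom_iSup {M N : QMod.{u, v} A} (f : M ⟶ N) {ι : Sort w} (g : ι → M.carrier) :
    f.1 (⨆ i, g i) = ⨆ i, f.1 (g i) := by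
  rw [iSup, f.2.1, iSup_range]

/-- The pointwise supremum of a set of module morphisms is a module morphism. -/
theorem isHom_biSup {M N : QMod.{u, v} A} (s : Set (M ⟶ N)) :
    IsHom M N (fun m => ⨆ f ∈ s, f.1 m) := by
  constructor
  · intro t
    calc (⨆ f ∈ s, f.1 (sSup t)) = ⨆ f ∈ s, ⨆ m ∈ t, f.1 m :=
          iSup_congr fun f => iSup_congr fun _ => f.2.1 t
      _ = ⨆ m ∈ t, ⨆ f ∈ s, f.1 m := iSup₂_comm _
  · intro m a
    simp only [iSup_act]
    exact iSup_congr fun f => iSup_congr fun _ => f.2.2 m a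

instance homSupSet (M N : QMod.{u, v} A) : SupSet (M ⟶ N) :=
  ⟨fun s => ⟨fun m => ⨆ f ∈ s, f.1 m, isHom_biSup s⟩⟩

instance homPartialOrder (M N : QMod.{u, v} A) : PartialOrder (M ⟶ N) :=
  inferInstanceAs (PartialOrder { f : M.carrier → N.carrier // IsHom M N f })

theorem hom_le_iff {M N : QMod.{u, v} A} {f g : M ⟶ N} : f ≤ g ↔ ∀ m, f.1 m ≤ g.1 m :=
  Iff.rfl

instance homCompleteLattice (M N : QMod.{u, v} A) : CompleteLattice (M ⟶ N) :=
  completeLatticeOfSup _ (fun s => by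
    constructor
    · intro f hf
      intro m
      exact le_iSup₂ (f := fun (f : M ⟶ N) (_ : f ∈ s) => f.1 m) f hf
    · intro g hg
      intro m
      exact iSup₂_le fun f hf => hg hf m)

theorem sSup_hom_apply {M N : QMod.{u, v} A} (s : Set (M ⟶ N)) (m : M.carrier) :
    (sSup s).1 m = ⨆ f ∈ s, f.1 m := rfl

theorem iSup_hom_apply {M N : QMod.{u, v} A} {ι : Sort w} (F : ι → (M ⟶ N)) (m : M.carrier) :
    (⨆ i, F i).1 m = ⨆ i, (F i).1 m := by
  rw [iSup]
  show ⨆ f ∈ range F, f.1 m = _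
  exact iSup_range

instance endMonoid (M : QMod.{u, v} A) : Monoid (M ⟶ M) where
  mul f g := g ≫ f
  one := 𝟙 M
  mul_assoc _ _ _ := Subtype.ext rfl
  one_mul _ := Subtype.ext rfl
  mul_one _ := Subtype.ext rfl

theorem end_mul_apply {M : QMod.{u, v} A} (f g : M ⟶ M) (m : M.carrier) :
    (f * g).1 m = f.1 (g.1 m) := rfl

/-- The endomorphism quantale `Hom_A(M,M)` of a right `A`-module `M`:
multiplication is composition, the unit is the identity, suprema are pointwise. -/
instance endQuantale (M : QMod.{u, v} A) : UQuantale (M ⟶ M) :=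
  { homCompleteLattice M M, endMonoid M with
    mul_sSup := fun a s => by
      apply Subtype.ext
      funext m
      show a.1 ((sSup s).1 m) = (⨆ b ∈ s, a * b).1 m
      rw [sSup_hom_apply]
      simp only [hom_iSup, iSup_hom_apply]
      rfl
    sSup_mul := fun s b => by
      apply Subtype.ext
      funext m
      show (sSup s).1 (b.1 m) = (⨆ a ∈ s, a * b).1 m
      rw [sSup_hom_apply]
      simp only [iSup_hom_apply]
      rfl }

/-- `Q` is a generator of the category of right `A`-modules:
the hom functor out of `Q` is faithful. -/
def IsGenerator {A : Type u} [UQuantale A] (Q : QMod.{u, v} A) : Prop :=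
  ∀ {M N : QMod.{u, v} A} (f g : M ⟶ N), (∀ h : Q ⟶ M, h ≫ f = h ≫ g) → f = g

/-- `Q` is projective: the hom functor out of `Q` sends epimorphisms to surjections. -/
def IsProjective {A : Type u} [UQuantale A] (Q : QMod.{u, v} A) : Prop :=
  ∀ {M N : QMod.{u, v} A} (p : M ⟶ N), Epi p → ∀ h : Q ⟶ N, ∃ k : Q ⟶ M, k ≫ p = h

end QMod

def MoritaEquivalent (A B : Type u) [UQuantale A] [UQuantale B] : Prop :=
  Nonempty (QMod.{u, u} A ≌ QMod.{u, u} B)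

def IsQuantaleIso {A : Type u} {B : Type v} [UQuantale A] [UQuantale B] (f : A → B) : Prop :=
  Function.Bijective f ∧ (∀ s : Set A, f (sSup s) = ⨆ a ∈ s, f a) ∧
    f 1 = 1 ∧ ∀ a a' : A, f (a * a') = f a * f a'
/-! ### Quantaloids -/

/-- The data of a complete lattice structure on each hom-set of a category. -/
class QuantaloidStruct (Q : Type u) [Category.{v} Q] where
  homLattice : ∀ X Y : Q, CompleteLattice (X ⟶ Y)

attribute [instance] QuantaloidStruct.homLattice

/-- A *quantaloid*: a category enriched in sup-lattices, i.e. each hom-set is a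
complete lattice and composition preserves arbitrary suprema in each variable. -/
class Quantaloid (Q : Type u) [Category.{v} Q] extends QuantaloidStruct Q where
  comp_sSup : ∀ {X Y Z : Q} (f : X ⟶ Y) (s : Set (Y ⟶ Z)), f ≫ sSup s = ⨆ g ∈ s, f ≫ g
  sSup_comp : ∀ {X Y Z : Q} (s : Set (X ⟶ Y)) (g : Y ⟶ Z), sSup s ≫ g = ⨆ f ∈ s, f ≫ g

namespace Quantaloid

variable {Q : Type u} [Category.{v} Q] [Quantaloid Q]

theorem comp_iSup {X Y Z : Q} (f : X ⟶ Y) {ι : Sort w} (g : ι → (Y ⟶ Z)) :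
    f ≫ (⨆ i, g i) = ⨆ i, f ≫ g i := by
  rw [iSup, comp_sSup]; exact iSup_range

theorem iSup_comp {X Y Z : Q} {ι : Sort w} (f : ι → (X ⟶ Y)) (g : Y ⟶ Z) :
    (⨆ i, f i) ≫ g = ⨆ i, f i ≫ g := by
  rw [iSup, sSup_comp]; exact iSup_range

/-- The endomorphism quantale of an object of a quantaloid: the complete lattice
`Hom(X,X)` with composition as multiplication and the identity as unit. -/
instance endQuantale (X : Q) : UQuantale (X ⟶ X) :=
  { QuantaloidStruct.homLattice X X with
    mul := fun f g => g ≫ f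
    one := 𝟙 X
    mul_assoc := fun f g h => (Category.assoc h g f).symm
    one_mul := fun f => Category.comp_id f
    mul_one := fun f => Category.id_comp f
    mul_sSup := fun a s => sSup_comp s a
    sSup_mul := fun s b => comp_sSup b s }

theorem end_mul_def (X : Q) (f g : X ⟶ X) : f * g = g ≫ f := rfl

end Quantaloid

/-! ### STATEMENT 1 -/

section Statement1

open Limits

variable {Q : Type u} [Category.{v} Q] [Quantaloid Q]

/-- For an object `Qo` of a quantaloid, `Hom(Qo, A)` is a right module over the
endomorphism quantale `E = Hom(Qo,Qo)`, the action being given by precomposition. -/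
def homModule (Qo A : Q) : QMod.{v, v} (Qo ⟶ Qo) where
  carrier := Qo ⟶ A
  latt := QuantaloidStruct.homLattice Qo A
  act m e := e ≫ m
  act_one m := Category.id_comp m
  act_mul m a b := by
    show (b ≫ a) ≫ m = b ≫ (a ≫ m)
    rw [Category.assoc]
  sSup_act s a := Quantaloid.comp_sSup a s
  act_sSup m s := Quantaloid.sSup_comp s m

/-- The functor `K^Q : Q ⥤ Mod_E(Sl)`, `A ↦ Hom(Qo, A)`, where `E = Hom(Qo,Qo)`. -/
def KQ (Qo : Q) : Q ⥤ QMod.{v, v} (Qo ⟶ Qo) where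
  obj A := homModule Qo A
  map {A B} f :=
    ⟨fun m => m ≫ f,
      ⟨fun s => Quantaloid.sSup_comp s f, fun m e => Category.assoc e m f⟩⟩
  map_id A := Subtype.ext (funext fun m => Category.comp_id m)
  map_comp f g := Subtype.ext (funext fun m => (Category.assoc m f g).symm)

/-! #### Auxiliary development -/

theorem qbot_comp {X Y Z : Q} (g : Y ⟶ Z) : (⊥ : X ⟶ Y) ≫ g = ⊥ := by
  have := Quantaloid.sSup_comp (∅ : Set (X ⟶ Y)) g
  simpa using this

theorem qcomp_bot {X Y Z : Q} (f : X ⟶ Y) : f ≫ (⊥ : Y ⟶ Z) = ⊥ := by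
  have := Quantaloid.comp_sSup f (∅ : Set (Y ⟶ Z))
  simpa using this

theorem QMod.act_bot {A : Type u} [UQuantale A] (M : QMod.{u, w} A) (m : M.carrier) :
    M.act m ⊥ = ⊥ := by
  have := M.act_sSup m (∅ : Set A)
  simpa using this

variable (Qo : Q) (hcop : ∀ X : Type v, HasCoproduct (fun _ : X => Qo))

/-- The copower `Qo^(X)`. -/
noncomputable def cop (X : Type v) : Q :=
  haveI := hcop X; ∐ (fun _ : X => Qo)

/-- Coproduct injections. -/
noncomputable def cin {X : Type v} (x : X) : Qo ⟶ cop Qo hcop X :=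
  haveI := hcop X; Sigma.ι (fun _ : X => Qo) x

/-- The universal map out of the copower. -/
noncomputable def cdesc {X : Type v} {A : Q} (f : X → (Qo ⟶ A)) : cop Qo hcop X ⟶ A :=
  haveI := hcop X; Sigma.desc f

@[simp] theorem cin_cdesc {X : Type v} {A : Q} (f : X → (Qo ⟶ A)) (x : X) :
    cin Qo hcop x ≫ cdesc Qo hcop f = f x := by
  haveI := hcop X
  exact Sigma.ι_desc f x

theorem cop_hom_ext {X : Type v} {A : Q} {g h : cop Qo hcop X ⟶ A}
    (w : ∀ x, cin Qo hcop x ≫ g = cin Qo hcop x ≫ h) : g = h := by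
  haveI := hcop X
  exact Sigma.hom_ext _ _ w

open Classical in
/-- Projections out of the copower, exhibiting it as a biproduct. -/
noncomputable def cpr {X : Type v} (x : X) : cop Qo hcop X ⟶ Qo :=
  cdesc Qo hcop (fun y => if y = x then 𝟙 Qo else ⊥)

open Classical in
theorem cin_cpr {X : Type v} (y x : X) :
    cin Qo hcop y ≫ cpr Qo hcop x = if y = x then 𝟙 Qo else ⊥ := by
  classical
  simp [cpr]

open Classical in
theorem iSup_ite_comp {X : Type v} {A : Q} (y : X) (g : X → (Qo ⟶ A)) :
    (⨆ x, (if y = x then (𝟙 Qo) else ⊥) ≫ g x) = g y := by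
  refine le_antisymm (iSup_le fun x => ?_) ?_
  · by_cases h : y = x
    · subst h; simp
    · simp [h, qbot_comp]
  · refine le_trans ?_ (le_iSup _ y)
    simp

theorem cpr_cin_id {X : Type v} :
    (⨆ x : X, cpr Qo hcop x ≫ cin Qo hcop x) = 𝟙 (cop Qo hcop X) := by
  apply cop_hom_ext
  intro y
  rw [Quantaloid.comp_iSup]
  simp only [← Category.assoc, cin_cpr]
  rw [iSup_ite_comp Qo y (fun x => cin Qo hcop x)]
  simp

/-- The key biproduct decomposition of composites with a `cdesc`. -/
theorem comp_cdesc {X : Type v} {A : Q} (m : Qo ⟶ cop Qo hcop X) (f : X → (Qo ⟶ A)) :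
    m ≫ cdesc Qo hcop f = ⨆ x, (m ≫ cpr Qo hcop x) ≫ f x := by
  conv_lhs => rw [← Category.id_comp (cdesc Qo hcop f), ← cpr_cin_id Qo hcop,
    Quantaloid.iSup_comp, Quantaloid.comp_iSup]
  exact iSup_congr fun x => by simp

/-- The copower functor `X ↦ Qo^(X)`, left adjoint to `Q(Qo,-)`. -/
noncomputable def copF : Type v ⥤ Q where
  obj X := cop Qo hcop X
  map f := cdesc Qo hcop (fun x => cin Qo hcop (f x))
  map_id X := cop_hom_ext Qo hcop (fun x => by simp [types_id_apply])
  map_comp f g := cop_hom_ext Qo hcop (fun x => by simp [← Category.assoc])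

/-- The copower adjunction `Qo^(-) ⊣ Q(Qo,-)`. -/
noncomputable def copAdj : copF Qo hcop ⊣ coyoneda.obj (Opposite.op Qo) :=
  Adjunction.mkOfHomEquiv
    { homEquiv := fun X A =>
        { toFun := fun g => TypeCat.ofHom (fun x => cin Qo hcop x ≫ g)
          invFun := fun f => cdesc Qo hcop f
          left_inv := fun g => cop_hom_ext Qo hcop (fun x => by simp)
          right_inv := fun f => by ext x; simp }
      homEquiv_naturality_left_symm := fun f g => cop_hom_ext Qo hcop (fun x => by
        show cin Qo hcop x ≫ cdesc Qo hcop (fun y => (f ≫ g) y)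
          = cin Qo hcop x ≫ ((copF Qo hcop).map f ≫ cdesc Qo hcop (fun y => g y))
        simp [copF, ← Category.assoc])
      homEquiv_naturality_right := fun g h => ConcreteCategory.hom_ext _ _ fun x => by
        show cin Qo hcop x ≫ (g ≫ h) = (cin Qo hcop x ≫ g) ≫ h
        exact (Category.assoc _ _ _).symm }

/-- The induced monad `X ↦ Q(Qo, Qo^(X))` on `Set`. -/
noncomputable def copT : Monad (Type v) := (copAdj Qo hcop).toMonad

theorem copT_obj (X : Type v) : (copT Qo hcop).obj X = (Qo ⟶ cop Qo hcop X) := rfl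

theorem copT_η (X : Type v) (x : X) :
    (copT Qo hcop).η.app X x = cin Qo hcop x := by
  simp only [copT, copAdj, Adjunction.toMonad_η, Adjunction.mkOfHomEquiv_unit_app,
    Equiv.coe_fn_mk]
  exact Category.comp_id (cin Qo hcop x)

theorem copT_map {X Y : Type v} (g : X ⟶ Y) (m : Qo ⟶ cop Qo hcop X) :
    (copT Qo hcop).map g m = m ≫ cdesc Qo hcop (fun x => cin Qo hcop (g x)) := rfl

theorem copT_μ (X : Type v) (m : Qo ⟶ cop Qo hcop (Qo ⟶ cop Qo hcop X)) :
    (copT Qo hcop).μ.app X m = m ≫ cdesc Qo hcop (fun g => g) := by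
  have : (copAdj Qo hcop).counit.app ((copF Qo hcop).obj X) =
      cdesc Qo hcop (fun g => g) := by
    simp only [copAdj, Adjunction.mkOfHomEquiv_counit_app, Equiv.coe_fn_symm_mk]
    rfl
  show ((copT Qo hcop).μ.app X) m = _
  simp only [copT, Adjunction.toMonad]
  show m ≫ (copAdj Qo hcop).counit.app ((copF Qo hcop).obj X) = _
  exact congrArg (fun t => m ≫ t) this


/-- The algebra structure map on a right `E`-module. -/
noncomputable def phiStr (M : QMod.{v, v} (Qo ⟶ Qo)) :
    (Qo ⟶ cop Qo hcop M.carrier) → M.carrier :=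
  fun m => ⨆ x, M.act x (m ≫ cpr Qo hcop x)

theorem phiStr_iSup (M : QMod.{v, v} (Qo ⟶ Qo)) {ι : Sort w}
    (m : ι → (Qo ⟶ cop Qo hcop M.carrier)) :
    phiStr Qo hcop M (⨆ i, m i) = ⨆ i, phiStr Qo hcop M (m i) := by
  unfold phiStr
  simp only [Quantaloid.iSup_comp, QMod.act_iSup]
  exact iSup_comm

theorem phiStr_comp_cin (M : QMod.{v, v} (Qo ⟶ Qo)) (x : M.carrier) (e : Qo ⟶ Qo) :
    phiStr Qo hcop M (e ≫ cin Qo hcop x) = M.act x e := by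
  unfold phiStr
  refine le_antisymm (iSup_le fun y => ?_) ?_
  · rw [Category.assoc, cin_cpr]
    by_cases h : x = y
    · subst h; rw [if_pos rfl, Category.comp_id]
    · rw [if_neg h, qcomp_bot, M.act_bot]; exact bot_le
  · refine le_trans ?_ (le_iSup _ x)
    rw [Category.assoc, cin_cpr, if_pos rfl, Category.comp_id]

theorem phiStr_cin (M : QMod.{v, v} (Qo ⟶ Qo)) (x : M.carrier) :
    phiStr Qo hcop M (cin Qo hcop x) = x := by
  rw [← Category.id_comp (cin Qo hcop x), phiStr_comp_cin]
  exact M.act_one x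

theorem phiStr_act (M : QMod.{v, v} (Qo ⟶ Qo)) (e : Qo ⟶ Qo)
    (g : Qo ⟶ cop Qo hcop M.carrier) :
    phiStr Qo hcop M (e ≫ g) = M.act (phiStr Qo hcop M g) e := by
  unfold phiStr
  rw [QMod.iSup_act]
  refine iSup_congr fun x => ?_
  have := (M.act_mul x (g ≫ cpr Qo hcop x) e).symm
  rw [Quantaloid.end_mul_def] at this
  rw [this, Category.assoc]

theorem phiStr_Tmap (M : QMod.{v, v} (Qo ⟶ Qo)) {X : Type v} (g : X → M.carrier)
    (m : Qo ⟶ cop Qo hcop X) :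
    phiStr Qo hcop M ((copT Qo hcop).map (TypeCat.ofHom g) m) = ⨆ x, M.act (g x) (m ≫ cpr Qo hcop x) := by
  rw [copT_map, comp_cdesc, phiStr_iSup]
  exact iSup_congr fun x => phiStr_comp_cin Qo hcop M (g x) _

/-- A right `E`-module as an Eilenberg–Moore algebra. -/
noncomputable def phiObj (M : QMod.{v, v} (Qo ⟶ Qo)) : (copT Qo hcop).Algebra where
  A := M.carrier
  a := TypeCat.ofHom (phiStr Qo hcop M)
  unit := by
    ext x
    show phiStr Qo hcop M ((copT Qo hcop).η.app M.carrier x) = x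
    rw [copT_η, phiStr_cin]
  assoc := by
    ext m
    show phiStr Qo hcop M ((copT Qo hcop).μ.app M.carrier m)
      = phiStr Qo hcop M ((copT Qo hcop).map (TypeCat.ofHom (phiStr Qo hcop M)) m)
    erw [phiStr_Tmap, copT_μ, comp_cdesc, phiStr_iSup]
    exact (iSup_congr fun g => (phiStr_act Qo hcop M _ g).symm).symm

/-- The comparison functor `Mod_E(Sl) ⥤ T-Alg`. -/
noncomputable def phi : QMod.{v, v} (Qo ⟶ Qo) ⥤ (copT Qo hcop).Algebra where
  obj M := phiObj Qo hcop M
  map {M N} f :=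
    { f := TypeCat.ofHom f.1
      h := by
        ext m
        show phiStr Qo hcop N ((copT Qo hcop).map (TypeCat.ofHom f.1) m) = f.1 (phiStr Qo hcop M m)
        erw [phiStr_Tmap]
        unfold phiStr
        rw [QMod.hom_iSup]
        exact iSup_congr fun x => (f.2.2 x _).symm }
  map_id M := rfl
  map_comp f g := rfl

instance phi_faithful : (phi Qo hcop).Faithful :=
  ⟨fun {M N} {f g} h => Subtype.ext (funext fun x => ConcreteCategory.congr_hom (congrArg Monad.Algebra.Hom.f h) x)⟩

instance phi_full : (phi Qo hcop).Full where
  map_surjective {M N} h := by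
    let f0 : M.carrier → N.carrier := fun x => h.f x
    have key : ∀ m : Qo ⟶ cop Qo hcop M.carrier,
        phiStr Qo hcop N (m ≫ cdesc Qo hcop (fun x => cin Qo hcop (f0 x)))
          = f0 (phiStr Qo hcop M m) := fun m => ConcreteCategory.congr_hom h.h m
    have hact : ∀ (x : M.carrier) (e : Qo ⟶ Qo), f0 (M.act x e) = N.act (f0 x) e := by
      intro x e
      rw [← phiStr_comp_cin Qo hcop M x e, ← key, Category.assoc, cin_cdesc,
        phiStr_comp_cin]
    have hsup : ∀ s : Set M.carrier, f0 (sSup s) = ⨆ m ∈ s, f0 m := by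
      intro s
      have h1 : sSup s = phiStr Qo hcop M (⨆ x ∈ s, cin Qo hcop x) := by
        simp only [phiStr_iSup, phiStr_cin]
        exact sSup_eq_iSup
      rw [h1, ← key]
      simp only [Quantaloid.iSup_comp, cin_cdesc, phiStr_iSup, phiStr_cin]
    exact ⟨⟨f0, hsup, hact⟩, rfl⟩

/-- The structure map of an algebra, with its underlying function type made explicit. -/
noncomputable def aOf (A : (copT Qo hcop).Algebra) : (Qo ⟶ cop Qo hcop A.A) → A.A := A.a

theorem alg_unit (A : (copT Qo hcop).Algebra) (x : A.A) :
    aOf Qo hcop A (cin Qo hcop x) = x := by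
  have h : A.a ((copT Qo hcop).η.app A.A x) = x := ConcreteCategory.congr_hom A.unit x
  rwa [copT_η] at h

theorem alg_flat (A : (copT Qo hcop).Algebra) {ι : Sort w} (e : ι → (Qo ⟶ Qo))
    (m : ι → (Qo ⟶ cop Qo hcop A.A)) :
    aOf Qo hcop A (⨆ i, e i ≫ cin Qo hcop (aOf Qo hcop A (m i)))
      = aOf Qo hcop A (⨆ i, e i ≫ m i) := by
  obtain ⟨W, hW⟩ : ∃ W : Qo ⟶ cop Qo hcop (Qo ⟶ cop Qo hcop A.A),
      W = ⨆ i, e i ≫ cin Qo hcop (m i) := ⟨_, rfl⟩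
  have h2 : A.a ((copT Qo hcop).μ.app A.A W) = A.a ((copT Qo hcop).map A.a W) :=
    ConcreteCategory.congr_hom A.assoc W
  erw [copT_μ, copT_map, hW] at h2
  simp only [Quantaloid.iSup_comp, Category.assoc, cin_cdesc] at h2
  have h3 : ((⨆ i, e i ≫ cin Qo hcop (m i)) ≫ cdesc Qo hcop fun x => cin Qo hcop (aOf Qo hcop A x))
      = ⨆ i, e i ≫ cin Qo hcop (aOf Qo hcop A (m i)) := by
    simp only [Quantaloid.iSup_comp, Category.assoc, cin_cdesc]
  rw [← h3]
  exact h2.symm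

theorem alg_flat' (A : (copT Qo hcop).Algebra) {ι : Sort w}
    (m : ι → (Qo ⟶ cop Qo hcop A.A)) :
    aOf Qo hcop A (⨆ i, cin Qo hcop (aOf Qo hcop A (m i)))
      = aOf Qo hcop A (⨆ i, m i) := by
  simpa only [Category.id_comp] using alg_flat Qo hcop A (fun _ => 𝟙 Qo) m

theorem alg_act_flat (A : (copT Qo hcop).Algebra) (e : Qo ⟶ Qo)
    (m : Qo ⟶ cop Qo hcop A.A) :
    aOf Qo hcop A (e ≫ cin Qo hcop (aOf Qo hcop A m)) = aOf Qo hcop A (e ≫ m) := by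
  simpa using alg_flat Qo hcop A (fun _ : Unit => e) (fun _ => m)

/-- The supremum operation on an algebra. -/
noncomputable def algSup (A : (copT Qo hcop).Algebra) (s : Set A.A) : A.A :=
  aOf Qo hcop A (⨆ x ∈ s, cin Qo hcop x)

theorem algSup_singleton (A : (copT Qo hcop).Algebra) (x : A.A) :
    algSup Qo hcop A {x} = x := by
  unfold algSup
  rw [iSup_singleton]
  exact alg_unit Qo hcop A x

theorem algSup_pair (A : (copT Qo hcop).Algebra) (x y : A.A) :
    algSup Qo hcop A {x, y} = aOf Qo hcop A (cin Qo hcop x ⊔ cin Qo hcop y) := by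
  unfold algSup
  rw [iSup_insert, iSup_singleton]

theorem algSup_union (A : (copT Qo hcop).Algebra) (s t : Set A.A) :
    algSup Qo hcop A (s ∪ t)
      = algSup Qo hcop A {algSup Qo hcop A s, algSup Qo hcop A t} := by
  rw [algSup_pair]
  unfold algSup
  have h := alg_flat' Qo hcop A (fun b : Bool =>
    cond b (⨆ x ∈ s, cin Qo hcop x : Qo ⟶ cop Qo hcop A.A) (⨆ x ∈ t, cin Qo hcop x))
  rw [iSup_bool_eq, iSup_bool_eq] at h
  simp only [Bool.cond_true, Bool.cond_false] at h
  rw [iSup_union]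
  exact h.symm

/-- The partial order induced on an algebra. -/
noncomputable def algPO (A : (copT Qo hcop).Algebra) : PartialOrder A.A where
  le x y := algSup Qo hcop A {x, y} = y
  le_refl x := by
    show algSup Qo hcop A {x, x} = x
    rw [Set.pair_eq_singleton, algSup_singleton]
  le_trans x y z hxy hyz := by
    show algSup Qo hcop A {x, z} = z
    have e1 : algSup Qo hcop A {x, z} = algSup Qo hcop A ({x} ∪ {y, z}) := by
      conv_lhs => rw [← hyz, ← algSup_singleton Qo hcop A x]
      exact (algSup_union Qo hcop A {x} {y, z}).symm
    have hset : ({x} ∪ {y, z} : Set A.A) = {x, y} ∪ {z} := by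
      ext w
      simp only [Set.mem_union, Set.mem_insert_iff, Set.mem_singleton_iff, or_assoc]
    rw [e1, hset, algSup_union, hxy, algSup_singleton, hyz]
  le_antisymm x y h1 h2 := by
    show x = y
    rw [← h1, Set.pair_comm, h2]

theorem algSup_le_ub (A : (copT Qo hcop).Algebra) (s : Set A.A) (y : A.A)
    (hub : ∀ x ∈ s, algSup Qo hcop A {x, y} = y) :
    algSup Qo hcop A (s ∪ {y}) = y := by
  classical
  set m : Option ↥s → (Qo ⟶ cop Qo hcop A.A) := fun o =>
    Option.elim o (cin Qo hcop y) (fun x => cin Qo hcop x.1 ⊔ cin Qo hcop y) with hm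
  have h1 : ∀ o, aOf Qo hcop A (m o) = y := by
    rintro (_ | x)
    · exact alg_unit Qo hcop A y
    · show aOf Qo hcop A (cin Qo hcop x.1 ⊔ cin Qo hcop y) = y
      rw [← algSup_pair]
      exact hub x.1 x.2
  have key := alg_flat' Qo hcop A m
  simp only [h1] at key
  haveI : Nonempty (Option ↥s) := ⟨none⟩
  rw [iSup_const, alg_unit] at key
  have h2 : (⨆ o, m o : Qo ⟶ cop Qo hcop A.A) = ⨆ x ∈ s ∪ {y}, cin Qo hcop x := by
    apply le_antisymm
    · refine iSup_le ?_
      rintro (_ | x)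
      · exact le_iSup₂ (f := fun (x : A.A) (_ : x ∈ s ∪ {y}) => cin Qo hcop x) y
          (Set.mem_union_right _ rfl)
      · exact sup_le
          (le_iSup₂ (f := fun (x : A.A) (_ : x ∈ s ∪ {y}) => cin Qo hcop x) x.1
            (Set.mem_union_left _ x.2))
          (le_iSup₂ (f := fun (x : A.A) (_ : x ∈ s ∪ {y}) => cin Qo hcop x) y
            (Set.mem_union_right _ rfl))
    · refine iSup₂_le ?_
      intro x hx
      rcases hx with hx | hx
      · exact le_trans le_sup_left (le_iSup m (some ⟨x, hx⟩))
      · rcases hx with rfl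
        exact le_iSup m none
  unfold algSup
  rw [← h2]
  exact key.symm

/-- The right `E`-module structure on an Eilenberg–Moore algebra. -/
noncomputable def algMod (A : (copT Qo hcop).Algebra) : QMod.{v, v} (Qo ⟶ Qo) :=
  letI po : PartialOrder A.A := algPO Qo hcop A
  letI ss : SupSet A.A := ⟨fun s => algSup Qo hcop A s⟩
  letI cl : CompleteLattice A.A := completeLatticeOfSup A.A (fun s => by
    constructor
    · intro x hx
      show algSup Qo hcop A {x, algSup Qo hcop A s} = algSup Qo hcop A s
      have h : algSup Qo hcop A ({x} ∪ s) = algSup Qo hcop A s := by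
        rw [Set.union_eq_self_of_subset_left (Set.singleton_subset_iff.2 hx)]
      rw [algSup_union, algSup_singleton] at h
      exact h
    · intro y hy
      show algSup Qo hcop A {algSup Qo hcop A s, y} = y
      have h := algSup_le_ub Qo hcop A s y (fun x hx => hy hx)
      rw [algSup_union, algSup_singleton] at h
      exact h)
  { carrier := A.A
    latt := cl
    act := fun x e => aOf Qo hcop A (e ≫ cin Qo hcop x)
    act_one := fun x => by
      show aOf Qo hcop A ((𝟙 Qo) ≫ cin Qo hcop x) = x
      rw [Category.id_comp]
      exact alg_unit Qo hcop A x
    act_mul := fun x a b => by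
      show aOf Qo hcop A ((b ≫ a) ≫ cin Qo hcop x)
        = aOf Qo hcop A (b ≫ cin Qo hcop (aOf Qo hcop A (a ≫ cin Qo hcop x)))
      rw [alg_act_flat, Category.assoc]
    sSup_act := fun s e => by
      show aOf Qo hcop A (e ≫ cin Qo hcop (algSup Qo hcop A s)) = _
      rw [← sSup_image]
      show _ = algSup Qo hcop A ((fun x => aOf Qo hcop A (e ≫ cin Qo hcop x)) '' s)
      unfold algSup
      rw [iSup_image, alg_act_flat]
      simp only [Quantaloid.comp_iSup]
      rw [iSup_subtype', iSup_subtype']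
      exact (alg_flat' Qo hcop A (fun x : ↥s => e ≫ cin Qo hcop x.1)).symm
    act_sSup := fun x u => by
      show aOf Qo hcop A (sSup u ≫ cin Qo hcop x) = _
      rw [← sSup_image]
      show _ = algSup Qo hcop A ((fun e => aOf Qo hcop A (e ≫ cin Qo hcop x)) '' u)
      unfold algSup
      rw [iSup_image, Quantaloid.sSup_comp]
      rw [iSup_subtype', iSup_subtype']
      exact (alg_flat' Qo hcop A (fun e : ↥u => e.1 ≫ cin Qo hcop x)).symm }

instance phi_essSurj : (phi Qo hcop).EssSurj where
  mem_essImage A := by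
    refine ⟨algMod Qo hcop A, ⟨Monad.Algebra.isoMk (Iso.refl _) ?_⟩⟩
    ext m
    show A.a ((copT Qo hcop).map (𝟙 A.A) m)
      = phiStr Qo hcop (algMod Qo hcop A) m
    have hm : (copT Qo hcop).map (𝟙 A.A) m = m := ConcreteCategory.congr_hom ((copT Qo hcop).map_id A.A) m
    rw [hm]
    show aOf Qo hcop A m
      = algSup Qo hcop A (Set.range fun x =>
          aOf Qo hcop A ((m ≫ cpr Qo hcop x) ≫ cin Qo hcop x))
    unfold algSup
    rw [iSup_range, alg_flat']
    have h : ∀ m' : Qo ⟶ cop Qo hcop A.A,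
        (⨆ x, (m' ≫ cpr Qo hcop x) ≫ cin Qo hcop x : Qo ⟶ cop Qo hcop A.A) = m' := by
      intro m'
      simp only [Category.assoc]
      rw [← Quantaloid.comp_iSup, cpr_cin_id]
      exact Category.comp_id m'
    exact congrArg (aOf Qo hcop A) (h m).symm

instance phi_isEquivalence : (phi Qo hcop).IsEquivalence := {}

theorem copAdj_counit (A : Q) :
    (copAdj Qo hcop).counit.app A = cdesc Qo hcop (fun g : Qo ⟶ A => g) := by
  simp only [copAdj, Adjunction.mkOfHomEquiv_counit_app, Equiv.coe_fn_symm_mk]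
  rfl

/-- The comparison functor of the copower adjunction agrees with `K^Q` followed by `phi`. -/
noncomputable def compIso :
    Monad.comparison (copAdj Qo hcop) ≅ KQ Qo ⋙ phi Qo hcop :=
  NatIso.ofComponents
    (fun A => Monad.Algebra.isoMk (Iso.refl _) (by
      ext m
      show phiStr Qo hcop (homModule Qo A) ((copT Qo hcop).map (𝟙 (Qo ⟶ A)) m)
        = m ≫ (copAdj Qo hcop).counit.app A
      have hm : (copT Qo hcop).map (𝟙 (Qo ⟶ A)) m = m :=
        ConcreteCategory.congr_hom ((copT Qo hcop).map_id _) m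
      rw [hm, copAdj_counit]
      exact (comp_cdesc Qo hcop (A := A) (X := Qo ⟶ A) m (fun g => g)).symm))
    (fun {A B} f => by
      apply Monad.Algebra.Hom.ext
      ext m
      rfl)

/-- Being monadic does not depend on the choice of the left adjoint: the induced monads
are isomorphic. -/
noncomputable def monadIsoOfSameRight {C : Type u₁} {D : Type u₂} [Category.{v₁} C]
    [Category.{v₂} D] {L L' : C ⥤ D} {R : D ⥤ C} (adj : L ⊣ R) (adj' : L' ⊣ R) :
    adj.toMonad ≅ adj'.toMonad :=
  MonadIso.mk (Functor.isoWhiskerRight (adj.leftAdjointUniq adj') R)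
    (fun X => adj.unit_leftAdjointUniq_hom_app adj' X)
    (fun X => by
      dsimp [Adjunction.toMonad]
      rw [← R.map_comp, ← R.map_comp, ← R.map_comp, Category.assoc,
        Adjunction.leftAdjointUniq_hom_app_counit, Adjunction.counit_naturality])

/-- Transfer of the comparison-equivalence property between two adjunctions with the
same right adjoint. -/
theorem comparison_isEquivalence_of_isEquivalence {C : Type u₁} {D : Type u₂}
    [Category.{v₁} C] [Category.{v₂} D] {L L' : C ⥤ D} {R : D ⥤ C}
    (adj : L ⊣ R) (adj' : L' ⊣ R) [(Monad.comparison adj').IsEquivalence] :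
    (Monad.comparison adj).IsEquivalence := by
  let i := monadIsoOfSameRight adj adj'
  let G : (adj'.toMonad).Algebra ⥤ (adj.toMonad).Algebra :=
    (Monad.algebraEquivOfIsoMonads i).inverse
  have e : Monad.comparison adj ≅ Monad.comparison adj' ⋙ G :=
    NatIso.ofComponents
      (fun X => Monad.Algebra.isoMk (Iso.refl _) (by
        show R.map (L.map (𝟙 (R.obj X))) ≫ (R.map ((adj.leftAdjointUniq adj').hom.app
            (R.obj X)) ≫ R.map (adj'.counit.app X)) = R.map (adj.counit.app X) ≫ 𝟙 (R.obj X)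
        have key : R.map ((adj.leftAdjointUniq adj').hom.app (R.obj X)) ≫ R.map (adj'.counit.app X)
            = R.map (adj.counit.app X) := by
          rw [← R.map_comp, Adjunction.leftAdjointUniq_hom_app_counit]
        have hid : R.map (L.map (𝟙 (R.obj X))) = 𝟙 _ := by rw [CategoryTheory.Functor.map_id, CategoryTheory.Functor.map_id]
        exact (congrArg (· ≫ _) hid).trans
          ((Category.id_comp _).trans (key.trans (Category.comp_id _).symm))))
      (fun {X Y} f => by
        apply Monad.Algebra.Hom.ext
        dsimp [G]
        simp
        exact (Category.comp_id _).trans (Category.id_comp _).symm)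
  haveI : (Monad.comparison adj' ⋙ G).IsEquivalence := inferInstance
  exact Functor.isEquivalence_of_iso e.symm

/-- if the quantaloid `Q` admits all set-indexed copowers of `Qo`, then
the functor `K^Q : Q ⥤ Mod_E(Sl)` is an equivalence of categories if and only if the
hom functor `Q(Qo, -) : Q ⥤ Set` is monadic. -/
theorem KQ_isEquivalence_iff_monadic (Qo : Q)
    (hcop : ∀ X : Type v, HasCoproduct (fun _ : X => Qo)) :
    (KQ Qo).IsEquivalence ↔
      Nonempty (MonadicRightAdjoint (coyoneda.obj (Opposite.op Qo))) := by
  constructor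
  · intro h
    refine ⟨⟨copF Qo hcop, copAdj Qo hcop, ?_⟩⟩
    haveI : (KQ Qo ⋙ phi Qo hcop).IsEquivalence := inferInstance
    exact (Functor.isEquivalence_iff_of_iso (compIso Qo hcop)).2 this
  · rintro ⟨m⟩
    haveI := m
    haveI : (Monad.comparison (copAdj Qo hcop)).IsEquivalence :=
      comparison_isEquivalence_of_isEquivalence (copAdj Qo hcop)
        (monadicAdjunction (coyoneda.obj (Opposite.op Qo)))
    haveI : (KQ Qo ⋙ phi Qo hcop).IsEquivalence :=
      (Functor.isEquivalence_iff_of_iso (compIso Qo hcop)).1 this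
    exact Functor.isEquivalence_of_comp_right (KQ Qo) (phi Qo hcop)

end Statement1
end

section
/- Let Q be a quantaloid and Q an object of Q such that all set-indexed copowers Q^(X) (coproducts of X copies of Q) exist in Q. Then Q is self-small: for every set X, the canonical comparison morphism Hom_Q(Q,Q)^(X) → Hom_Q(Q, Q^(X)) (the unique morphism whose composite with the x-th coproduct injection equals Hom_Q(Q, ι_x), where ι_x : Q → Q^(X) is the x-th coproduct injection) is an isomorphism. Consequently the functor Hom_Q(Q,−) : Q → Sl commutes with arbitrary set-indexed coproducts of copies of Q. -/
open CategoryTheory Set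

universe u v w

/-! ### STATEMENT 2 -/

section Statement2

open Limits

variable {Q : Type u} [Category.{v} Q] [Quantaloid Q]

/-- The canonical comparison morphism `Hom(Qo,Qo)^(X) ⟶ Hom(Qo, Qo^(X))` in the
category of sup-lattices.  The copower (= biproduct) of `X` copies of the sup-lattice
`Hom(Qo,Qo)` is the function sup-lattice `X → (Qo ⟶ Qo)`, and the comparison morphism
sends a family `e` to `⨆ x, e x ≫ ι_x`.  It is the unique sup-preserving map whose
composite with the `x`-th coproduct injection `f ↦ (fun y => ⨆ _ : y = x, f)` of the
copower equals `Hom(Qo, ι_x) = (· ≫ ι_x)`. -/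
noncomputable def copowerComparison (Qo : Q) (X : Type v) [HasCoproduct (fun _ : X => Qo)] :
    (X → (Qo ⟶ Qo)) → (Qo ⟶ ∐ fun _ : X => Qo) :=
  fun e => ⨆ x, e x ≫ Sigma.ι (fun _ : X => Qo) x

/-- every object `Qo` of a quantaloid admitting set-indexed copowers is
self-small: for every set `X` the canonical comparison morphism
`Hom(Qo,Qo)^(X) ⟶ Hom(Qo, Qo^(X))` is an isomorphism of sup-lattices; that is, it is
the (unique) sup-preserving map whose composites with the coproduct injections are the
maps `Hom(Qo, ι_x)`, and it is bijective.  Consequently `Hom(Qo,-)` commutes with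
arbitrary set-indexed coproducts of copies of `Qo`. -/
theorem self_small (Qo : Q) (hcop : ∀ X : Type v, HasCoproduct (fun _ : X => Qo))
    (X : Type v) [HasCoproduct (fun _ : X => Qo)] :
    (∀ (x : X) (f : Qo ⟶ Qo),
      copowerComparison Qo X (fun y => ⨆ _ : y = x, f) = f ≫ Sigma.ι (fun _ : X => Qo) x) ∧
    (∀ s : Set (X → (Qo ⟶ Qo)),
      copowerComparison Qo X (sSup s) = ⨆ e ∈ s, copowerComparison Qo X e) ∧
    Function.Bijective (copowerComparison Qo X) := by
  classical
  -- projections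
  set F := fun _ : X => Qo with hF
  let π : ∀ x : X, (∐ F) ⟶ Qo := fun x => Sigma.desc (fun y => ⨆ _ : y = x, 𝟙 Qo)
  have hιπ : ∀ y x : X, Sigma.ι F y ≫ π x = ⨆ _ : y = x, 𝟙 Qo := fun y x => by
    simp [π]
  have hcomp_bot : ∀ {Y Z : Q} (g : Y ⟶ Z), (⊥ : (Qo ⟶ Y)) ≫ g = ⊥ := by
    intro Y Z g
    have := Quantaloid.sSup_comp (∅ : Set (Qo ⟶ Y)) g
    simpa using this
  have key : ∀ (e : X → (Qo ⟶ Qo)) (x : X),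
      copowerComparison Qo X e ≫ π x = e x := by
    intro e x
    rw [copowerComparison, Quantaloid.iSup_comp]
    have : ∀ y, (e y ≫ Sigma.ι F y) ≫ π x = ⨆ _ : y = x, e y := by
      intro y
      rw [Category.assoc, hιπ, Quantaloid.comp_iSup]
      exact iSup_congr fun _ => Category.comp_id _
    refine (iSup_congr this).trans ?_
    exact iSup_iSup_eq_left (f := fun y (_ : y = x) => e y)
  have hid : (⨆ x : X, π x ≫ Sigma.ι F x) = 𝟙 (∐ F) := by
    apply Sigma.hom_ext
    intro y
    rw [Quantaloid.comp_iSup]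
    have : ∀ x, Sigma.ι F y ≫ π x ≫ Sigma.ι F x = ⨆ _ : y = x, Sigma.ι F y := by
      intro x
      rw [← Category.assoc, hιπ, Quantaloid.iSup_comp]
      refine iSup_congr fun h => ?_
      subst h; exact Category.id_comp _
    simp only [this]
    rw [iSup_iSup_eq_right (f := fun x (_ : y = x) => Sigma.ι F y), Category.comp_id]
  refine ⟨?_, ?_, ?_⟩
  · intro x f
    rw [copowerComparison]
    have : ∀ y, (⨆ _ : y = x, f) ≫ Sigma.ι F y = ⨆ _ : y = x, f ≫ Sigma.ι F y := by
      intro y; exact Quantaloid.iSup_comp _ _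
    refine (iSup_congr this).trans ?_
    exact iSup_iSup_eq_left (f := fun y (_ : y = x) => f ≫ Sigma.ι F y)
  · intro s
    have : ∀ x, sSup s x ≫ Sigma.ι F x = ⨆ e : s, (e : X → (Qo ⟶ Qo)) x ≫ Sigma.ι F x := by
      intro x
      rw [sSup_apply, Quantaloid.iSup_comp]
    calc copowerComparison Qo X (sSup s)
        = ⨆ x, ⨆ e : s, (e : X → (Qo ⟶ Qo)) x ≫ Sigma.ι F x := by
          rw [copowerComparison]; exact iSup_congr this
      _ = ⨆ e : s, ⨆ x, (e : X → (Qo ⟶ Qo)) x ≫ Sigma.ι F x := iSup_comm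
      _ = ⨆ e ∈ s, copowerComparison Qo X e := by
          rw [iSup_subtype']; rfl
  · constructor
    · intro e e' h
      funext x
      rw [← key e x, h, key e' x]
    · intro f
      refine ⟨fun x => f ≫ π x, ?_⟩
      rw [copowerComparison]
      simp only [Category.assoc]
      rw [← Quantaloid.comp_iSup, hid, Category.comp_id]

end Statement2
end

section
/- For any small quantaloid Q, the category of Sl-enriched functors from Q to Sl and Sl-natural transformations between them is equivalent to the category Mod_E(Sl) of right modules over a quantale; explicitly, one may take E to be the endomorphism quantale of the Sl-functor Q = ⊕_{X ∈ Q} Q(X,−), the biproduct over all objects X of Q of the representable Sl-functors. -/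
open CategoryTheory Set

universe u v w

/-! ### STATEMENT 5 -/

section Statement5

/-- A bundled sup-lattice (an object of the category `Sl`). -/
structure SupLat : Type (u + 1) where
  carrier : Type u
  [latt : CompleteLattice carrier]

attribute [instance] SupLat.latt

variable (Q : Type u) [Category.{u} Q] [Quantaloid Q]

/-- An `Sl`-enriched functor from a small quantaloid `Q` to the category `Sl` of
sup-lattices: it assigns a sup-lattice to each object, a sup-preserving map to each
morphism, functorially, and its action on each hom-sup-lattice is sup-preserving. -/
structure SlFunctor : Type (u + 1) where
  obj : Q → SupLat.{u}
  map : ∀ {X Y : Q}, (X ⟶ Y) → (obj X).carrier → (obj Y).carrier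
  map_sSup : ∀ {X Y : Q} (f : X ⟶ Y) (s : Set (obj X).carrier),
    map f (sSup s) = ⨆ m ∈ s, map f m
  map_id : ∀ X : Q, map (𝟙 X) = id
  map_comp : ∀ {X Y Z : Q} (f : X ⟶ Y) (g : Y ⟶ Z), map (f ≫ g) = map g ∘ map f
  sSup_map : ∀ {X Y : Q} (s : Set (X ⟶ Y)) (m : (obj X).carrier),
    map (sSup s) m = ⨆ f ∈ s, map f m

variable {Q}

theorem SlFunctor.map_iSup (F : SlFunctor Q) {X Y : Q} (f : X ⟶ Y) {ι : Sort w}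
    (g : ι → (F.obj X).carrier) : F.map f (⨆ i, g i) = ⨆ i, F.map f (g i) := by
  rw [iSup, F.map_sSup]; exact iSup_range

/-- `Sl`-natural transformations between `Sl`-functors: families of sup-preserving
maps satisfying the naturality equations. -/
def IsSlNat (F G : SlFunctor Q) (α : ∀ X : Q, (F.obj X).carrier → (G.obj X).carrier) :
    Prop :=
  (∀ (X : Q) (s : Set (F.obj X).carrier), α X (sSup s) = ⨆ m ∈ s, α X m) ∧
  (∀ {X Y : Q} (f : X ⟶ Y) (m : (F.obj X).carrier), α Y (F.map f m) = G.map f (α X m))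

/-- The category of `Sl`-functors and `Sl`-natural transformations from `Q` to `Sl`. -/
instance : Category.{u} (SlFunctor Q) where
  Hom F G := { α : ∀ X : Q, (F.obj X).carrier → (G.obj X).carrier // IsSlNat F G α }
  id F := ⟨fun _ => id, ⟨fun X s => by simp [sSup_eq_iSup], fun _ _ => rfl⟩⟩
  comp {F G H} α β :=
    ⟨fun X => β.1 X ∘ α.1 X, by
      constructor
      · intro X s
        show β.1 X (α.1 X (sSup s)) = _
        rw [α.2.1, ← sSup_image, β.2.1, iSup_image]
        rfl
      · intro X Y f m
        show β.1 Y (α.1 Y (F.map f m)) = _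
        rw [α.2.2, β.2.2]
        rfl⟩
  id_comp _ := Subtype.ext rfl
  comp_id _ := Subtype.ext rfl
  assoc _ _ _ := Subtype.ext rfl

theorem slNat_iSup {F G : SlFunctor Q} (β : F ⟶ G) (X : Q) {ι : Sort w}
    (g : ι → (F.obj X).carrier) : β.1 X (⨆ i, g i) = ⨆ i, β.1 X (g i) := by
  rw [iSup, β.2.1, iSup_range]

theorem isSlNat_biSup {F G : SlFunctor Q} (s : Set (F ⟶ G)) :
    IsSlNat F G (fun X m => ⨆ β ∈ s, β.1 X m) := by
  constructor
  · intro X t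
    calc (⨆ β ∈ s, β.1 X (sSup t)) = ⨆ β ∈ s, ⨆ m ∈ t, β.1 X m :=
          iSup_congr fun β => iSup_congr fun _ => β.2.1 X t
      _ = ⨆ m ∈ t, ⨆ β ∈ s, β.1 X m := iSup₂_comm _
  · intro X Y f m
    simp only [SlFunctor.map_iSup]
    exact iSup_congr fun β => iSup_congr fun _ => β.2.2 f m

instance slHomSupSet (F G : SlFunctor Q) : SupSet (F ⟶ G) :=
  ⟨fun s => ⟨fun X m => ⨆ β ∈ s, β.1 X m, isSlNat_biSup s⟩⟩

instance slHomPartialOrder (F G : SlFunctor Q) : PartialOrder (F ⟶ G) :=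
  inferInstanceAs (PartialOrder
    { α : ∀ X : Q, (F.obj X).carrier → (G.obj X).carrier // IsSlNat F G α })

instance slHomCompleteLattice (F G : SlFunctor Q) : CompleteLattice (F ⟶ G) :=
  completeLatticeOfSup _ (fun s => by
    constructor
    · intro β hβ X m
      exact le_iSup₂ (f := fun (β : F ⟶ G) (_ : β ∈ s) => β.1 X m) β hβ
    · intro γ hγ X m
      exact iSup₂_le fun β hβ => hγ hβ X m)

theorem slHom_sSup_apply {F G : SlFunctor Q} (s : Set (F ⟶ G)) (X : Q)
    (m : (F.obj X).carrier) : (sSup s).1 X m = ⨆ β ∈ s, β.1 X m := rfl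

theorem slHom_iSup_apply {F G : SlFunctor Q} {ι : Sort w} (h : ι → (F ⟶ G)) (X : Q)
    (m : (F.obj X).carrier) : (⨆ i, h i).1 X m = ⨆ i, (h i).1 X m := by
  rw [iSup]
  show ⨆ β ∈ Set.range h, β.1 X m = _
  exact iSup_range

/-- The category of `Sl`-functors and `Sl`-natural transformations is itself a
quantaloid (suprema of natural transformations are computed pointwise). -/
instance : Quantaloid (SlFunctor Q) where
  homLattice F G := slHomCompleteLattice F G
  comp_sSup {F G H} α s := by
    apply Subtype.ext
    funext X m
    show (sSup s).1 X (α.1 X m) = (⨆ g ∈ s, α ≫ g).1 X m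
    rw [slHom_sSup_apply]
    simp only [slHom_iSup_apply]
    rfl
  sSup_comp {F G H} s β := by
    apply Subtype.ext
    funext X m
    show β.1 X ((sSup s).1 X m) = (⨆ α ∈ s, α ≫ β).1 X m
    rw [slHom_sSup_apply]
    simp only [slNat_iSup, slHom_iSup_apply]
    rfl

variable (Q)

/-- The `Sl`-functor `⊕_{X ∈ Q} Q(X, -)`: the biproduct, over all objects `X` of
`Q`, of the representable `Sl`-functors, computed pointwise (recall that in `Sl`
small coproducts are biproducts, i.e. products). -/
def RepBiprod : SlFunctor Q where
  obj Y := ⟨∀ X : Q, (X ⟶ Y)⟩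
  map {Y Z} f h := fun X => h X ≫ f
  map_sSup {Y Z} f s := by
    funext X
    have h1 : (sSup s : ∀ X : Q, (X ⟶ Y)) X = ⨆ h ∈ s, h X :=
      sSup_apply.trans (iSup_subtype'' s fun h => h X)
    show sSup s X ≫ f = _
    rw [h1]
    simp only [Quantaloid.iSup_comp, iSup_apply]
  map_id Y := by
    funext h X
    exact Category.comp_id (h X)
  map_comp {Y Z W} f g := by
    funext h X
    exact (Category.assoc (h X) f g).symm
  sSup_map {Y Z} s m := by
    funext X
    show m X ≫ sSup s = _
    rw [Quantaloid.comp_sSup]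
    simp only [iSup_apply]

namespace S5

variable {Q}

/-- Pointwise description of `sSup` in the biproduct of representables. -/
lemma pSSup_apply {W : Q} (s : Set (((RepBiprod Q).obj W).carrier)) (X : Q) :
    sSup s X = ⨆ h ∈ s, h X := by
  exact sSup_apply.trans (iSup_subtype'' s fun h => h X)

lemma pISup_apply {W : Q} {ι : Sort w} (g : ι → ((RepBiprod Q).obj W).carrier) (X : Q) :
    (⨆ i, g i) X = ⨆ i, g i X := by
  exact iSup_apply

lemma map_iSup2 (F : SlFunctor Q) {X Y : Q} {ι : Sort w} (f : ι → (X ⟶ Y))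
    (m : (F.obj X).carrier) : F.map (⨆ i, f i) m = ⨆ i, F.map (f i) m := by
  rw [iSup, F.sSup_map]; exact iSup_range

lemma iSup_eq_rfl {L : Type*} [CompleteLattice L] {C : Sort*} {x : C} (f : x = x → L) :
    (⨆ p : x = x, f p) = f rfl :=
  iSup_pos rfl

lemma RB_map_apply {W V : Q} (g : W ⟶ V) (h : ((RepBiprod Q).obj W).carrier) (X : Q) :
    (RepBiprod Q).map g h X = h X ≫ g := rfl

lemma slHom_ext {F G : SlFunctor Q} {α β : F ⟶ G} (h : ∀ X m, α.1 X m = β.1 X m) : α = β :=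
  Subtype.ext (funext fun X => funext fun m => h X m)

lemma slComp_apply {F G H : SlFunctor Q} (α : F ⟶ G) (β : G ⟶ H) (X : Q)
    (m : (F.obj X).carrier) : (α ≫ β).1 X m = β.1 X (α.1 X m) := rfl

/-- The generic element of the biproduct of representables at `X`. -/
def uE (X : Q) : ((RepBiprod Q).obj X).carrier := fun X' => ⨆ (p : X' = X), eqToHom p

lemma uE_self (X : Q) : uE X X = 𝟙 X := by
  show (⨆ p : X = X, (eqToHom p : X ⟶ X)) = 𝟙 X
  rw [iSup_eq_rfl]; rfl

/-- The endomorphism of `⊕ Q(X,-)` induced by `f : Y ⟶ Z`: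
"include the `Y` component into the `Z` component via `f`". -/
def eE {Y Z : Q} (f : Y ⟶ Z) : RepBiprod Q ⟶ RepBiprod Q :=
  ⟨fun W h X' => ⨆ (p : X' = Y), eqToHom p ≫ f ≫ h Z, by
    constructor
    · intro W s
      funext X'
      simp only [pISup_apply, pSSup_apply, Quantaloid.comp_iSup, iSup_apply]
      exact iSup_comm.trans (iSup_congr fun h => iSup_comm.trans (pISup_apply (W := W)
        (fun _ : h ∈ s => (fun X' => ⨆ (p : X' = Y), eqToHom p ≫ f ≫ h Z :
          ((RepBiprod Q).obj W).carrier)) X').symm)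
    · intro W W' g h
      funext X'
      show (⨆ (p : X' = Y), eqToHom p ≫ f ≫ (h Z ≫ g)) =
          (⨆ (p : X' = Y), eqToHom p ≫ f ≫ h Z) ≫ g
      rw [Quantaloid.iSup_comp]
      exact iSup_congr fun p => by simp [Category.assoc]⟩

lemma eE_apply {Y Z : Q} (f : Y ⟶ Z) (W : Q) (h : ((RepBiprod Q).obj W).carrier) (X' : Q) :
    (eE f).1 W h X' = ⨆ (p : X' = Y), eqToHom p ≫ f ≫ h Z := rfl

lemma eE_apply_self {Y Z : Q} (f : Y ⟶ Z) (W : Q) (h : ((RepBiprod Q).obj W).carrier) :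
    (eE f).1 W h Y = f ≫ h Z := by
  show (⨆ p : Y = Y, eqToHom p ≫ f ≫ h Z) = f ≫ h Z
  rw [iSup_eq_rfl]; simp

/-- The endomorphism of `⊕ Q(X,-)` induced by an element `h` of its value at `W`. -/
def aE {W : Q} (h : ((RepBiprod Q).obj W).carrier) : RepBiprod Q ⟶ RepBiprod Q :=
  ⟨fun V k => (RepBiprod Q).map (k W) h, by
    constructor
    · intro V s
      show (RepBiprod Q).map (sSup s W) h = _
      rw [pSSup_apply]
      simp only [map_iSup2]
    · intro V V' g k
      show (RepBiprod Q).map ((k W) ≫ g) h = _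
      rw [(RepBiprod Q).map_comp]
      rfl⟩

lemma aE_apply {W : Q} (h : ((RepBiprod Q).obj W).carrier) (V : Q)
    (k : ((RepBiprod Q).obj V).carrier) : (aE h).1 V k = (RepBiprod Q).map (k W) h := rfl

lemma eE_comp {X Y Z : Q} (f : X ⟶ Y) (g : Y ⟶ Z) : eE (f ≫ g) = eE g ≫ eE f := by
  apply slHom_ext; intro W h; funext X'
  show (⨆ p : X' = X, eqToHom p ≫ (f ≫ g) ≫ h Z) =
      ⨆ p : X' = X, eqToHom p ≫ f ≫ ((eE g).1 W h Y)
  rw [eE_apply_self]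
  exact iSup_congr fun p => by simp [Category.assoc]

lemma eE_sSup {X Y : Q} (s : Set (X ⟶ Y)) : eE (sSup s) = ⨆ f ∈ s, eE f := by
  apply slHom_ext; intro W h; funext X'
  rw [show (⨆ f ∈ s, eE f).1 W h X' = ⨆ f ∈ s, (eE f).1 W h X' by
    simp only [slHom_iSup_apply, pISup_apply]]
  show (⨆ p : X' = X, eqToHom p ≫ sSup s ≫ h Y) = ⨆ f ∈ s, (eE f).1 W h X'
  simp only [eE_apply, Quantaloid.sSup_comp, Quantaloid.comp_iSup]
  exact iSup_comm.trans (iSup_congr fun f => iSup_comm)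

lemma eId_comp_aE {W : Q} (h : ((RepBiprod Q).obj W).carrier) :
    eE (𝟙 W) ≫ aE h = aE h := by
  apply slHom_ext; intro V k
  show (RepBiprod Q).map ((eE (𝟙 W)).1 V k W) h = (RepBiprod Q).map (k W) h
  rw [eE_apply_self, Category.id_comp]

lemma aE_sSup {W : Q} (s : Set (((RepBiprod Q).obj W).carrier)) :
    aE (sSup s) = ⨆ h ∈ s, aE h := by
  apply slHom_ext; intro V k
  show (RepBiprod Q).map (k W) (sSup s) = _
  rw [(RepBiprod Q).map_sSup]
  simp only [slHom_iSup_apply]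
  rfl

lemma aE_map {W W' : Q} (g : W ⟶ W') (h : ((RepBiprod Q).obj W).carrier) :
    aE ((RepBiprod Q).map g h) = eE g ≫ aE h := by
  apply slHom_ext; intro V k
  show (RepBiprod Q).map (k W') ((RepBiprod Q).map g h) =
      (RepBiprod Q).map ((eE g).1 V k W) h
  rw [eE_apply_self, (RepBiprod Q).map_comp]
  rfl

lemma aE_nat {W : Q} (b : RepBiprod Q ⟶ RepBiprod Q) (h : ((RepBiprod Q).obj W).carrier) :
    aE (b.1 W h) = aE h ≫ b := by
  apply slHom_ext; intro V k
  show (RepBiprod Q).map (k W) (b.1 W h) = b.1 V ((RepBiprod Q).map (k W) h)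
  exact (b.2.2 (k W) h).symm

lemma iSup_aE_uE : (⨆ X : Q, aE (uE X)) = 𝟙 (RepBiprod Q) := by
  apply slHom_ext; intro V k
  funext X'
  rw [show (⨆ X : Q, aE (uE X)).1 V k X' = ⨆ X : Q, uE X X' ≫ k X by
    simp only [slHom_iSup_apply, pISup_apply]; rfl]
  show _ = k X'
  simp only [uE, Quantaloid.iSup_comp]
  rw [iSup_iSup_eq_right]
  simp

lemma decompRB (W : Q) (h : ((RepBiprod Q).obj W).carrier) :
    h = ⨆ X : Q, (RepBiprod Q).map (h X) (uE X) := by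
  funext X'
  rw [pISup_apply]
  show h X' = ⨆ X : Q, uE X X' ≫ h X
  simp only [uE, Quantaloid.iSup_comp]
  rw [iSup_iSup_eq_right]
  simp

lemma aE_comp_eId {W X : Q} (h : ((RepBiprod Q).obj W).carrier) :
    aE h ≫ eE (𝟙 X) = eE (h X) ≫ eE (𝟙 X) := by
  apply slHom_ext; intro V k; funext X'
  show (⨆ p : X' = X, eqToHom p ≫ 𝟙 X ≫ ((aE h).1 V k) X) =
      ⨆ p : X' = X, eqToHom p ≫ 𝟙 X ≫ ((eE (h X)).1 V k) X
  refine iSup_congr fun p => ?_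
  rw [show ((aE h).1 V k) X = h X ≫ k W from rfl, eE_apply_self]

/-- The `Sl`-natural transformation `⊕ Q(X,-) ⟶ F` induced by an element `x ∈ F X`. -/
def alphaN (F : SlFunctor Q) {X : Q} (x : (F.obj X).carrier) : RepBiprod Q ⟶ F :=
  ⟨fun W h => F.map (h X) x, by
    constructor
    · intro W s
      show F.map (sSup s X) x = _
      rw [pSSup_apply]
      simp only [map_iSup2]
    · intro W W' g h
      show F.map (h X ≫ g) x = _
      rw [F.map_comp]; rfl⟩

lemma alphaN_eval (F : SlFunctor Q) {X : Q} (x : (F.obj X).carrier) :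
    (alphaN F x).1 X (uE X) = x := by
  show F.map (uE X X) x = x
  rw [uE_self]
  exact congrFun (F.map_id X) x

lemma alphaN_sSup (F : SlFunctor Q) {X : Q} (s : Set (F.obj X).carrier) :
    alphaN F (sSup s) = ⨆ x ∈ s, alphaN F x := by
  apply slHom_ext; intro W h
  show F.map (h X) (sSup s) = _
  rw [F.map_sSup]
  simp only [slHom_iSup_apply]
  rfl

lemma alphaN_map (F : SlFunctor Q) {X Y : Q} (f : X ⟶ Y) (x : (F.obj X).carrier) :
    alphaN F (F.map f x) = eE f ≫ alphaN F x := by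
  apply slHom_ext; intro W h
  show F.map (h Y) (F.map f x) = F.map (((eE f).1 W h) X) x
  rw [eE_apply_self, F.map_comp]
  rfl

lemma eE_uE {X Y : Q} (f : X ⟶ Y) :
    (eE f).1 Y (uE Y) = (RepBiprod Q).map f (uE X) := by
  funext X'
  show (⨆ p : X' = X, eqToHom p ≫ f ≫ uE Y Y) = uE X X' ≫ f
  rw [uE_self]
  show _ = (⨆ p : X' = X, (eqToHom p : X' ⟶ X)) ≫ f
  rw [Quantaloid.iSup_comp]
  exact iSup_congr fun p => by simp

lemma alphaN_gamma {F : SlFunctor Q} (γ : RepBiprod Q ⟶ F) {W : Q}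
    (h : ((RepBiprod Q).obj W).carrier) : alphaN F (γ.1 W h) = aE h ≫ γ := by
  apply slHom_ext; intro V k
  show F.map (k W) (γ.1 W h) = γ.1 V ((RepBiprod Q).map (k W) h)
  exact (γ.2.2 (k W) h).symm

lemma aE_uE {W : Q} (h : ((RepBiprod Q).obj W).carrier) : (aE h).1 W (uE W) = h := by
  show (RepBiprod Q).map (uE W W) h = h
  rw [uE_self]
  exact congrFun ((RepBiprod Q).map_id W) h

/-! ### Fixed points of the idempotent actions -/

variable (M : QMod.{u, u} (RepBiprod Q ⟶ RepBiprod Q))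

/-- The fixed points of the action of the idempotent `eE (𝟙 Y)` on `M`. -/
def FixPt (Y : Q) : Type u := {m : M.carrier // M.act m (eE (𝟙 Y)) = m}

instance (Y : Q) : PartialOrder (FixPt M Y) :=
  inferInstanceAs (PartialOrder {m : M.carrier // M.act m (eE (𝟙 Y)) = m})

instance (Y : Q) : SupSet (FixPt M Y) :=
  ⟨fun s => ⟨sSup (Subtype.val '' s), by
    rw [M.sSup_act, sSup_eq_iSup]
    exact iSup_congr fun m => iSup_congr fun hm => by
      obtain ⟨m', _, rfl⟩ := hm
      exact m'.2⟩⟩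

instance (Y : Q) : CompleteLattice (FixPt M Y) :=
  completeLatticeOfSup _ (fun s => by
    constructor
    · intro m hm
      exact le_sSup (Set.mem_image_of_mem _ hm)
    · intro b hb
      exact sSup_le fun m hm => by
        obtain ⟨m', hm', rfl⟩ := hm
        exact hb hm')

lemma fixVal_sSup (Y : Q) (s : Set (FixPt M Y)) :
    (sSup s).val = sSup (Subtype.val '' s) := rfl

lemma fixVal_iSup (Y : Q) {ι : Sort w} (g : ι → FixPt M Y) :
    (⨆ i, g i).val = ⨆ i, (g i).val := by
  erw [iSup, fixVal_sSup, ← Set.range_comp]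
  rfl

/-- The `Sl`-functor associated to a right module over the endomorphism quantale. -/
def PsiF : SlFunctor Q where
  obj Y := ⟨FixPt M Y⟩
  map {Y Z} f m := ⟨M.act m.val (eE f), by
    rw [← M.act_mul, show eE f * eE (𝟙 Z) = eE f by
      rw [Quantaloid.end_mul_def, ← eE_comp, Category.comp_id]]⟩
  map_sSup {Y Z} f s := by
    apply Subtype.ext
    show M.act (sSup s : FixPt M Y).val (eE f) = _
    rw [fixVal_sSup, M.sSup_act]
    simp only [fixVal_iSup]
    erw [iSup_image]
    exact iSup_congr fun i => by erw [fixVal_iSup]; rfl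
  map_id Y := by
    funext m
    apply Subtype.ext
    exact m.2
  map_comp {Y Z W} f g := by
    funext m
    apply Subtype.ext
    show M.act m.val (eE (f ≫ g)) = M.act (M.act m.val (eE f)) (eE g)
    rw [eE_comp, ← Quantaloid.end_mul_def, M.act_mul]
  sSup_map {Y Z} s m := by
    apply Subtype.ext
    show M.act m.val (eE (sSup s)) = _
    rw [eE_sSup]
    simp only [M.act_iSup, fixVal_iSup]
    exact iSup_congr fun f => by erw [fixVal_iSup]

lemma psiVal_iSup (W : Q) {ι : Sort w} (g : ι → ((PsiF M).obj W).carrier) :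
    (⨆ i, g i).val = ⨆ i, (g i).val :=
  fixVal_iSup M W g

/-- The hom functor `Hom(⊕ Q(X,-), -)` into modules over the endomorphism quantale. -/
def PhiF : SlFunctor Q ⥤ QMod.{u, u} (RepBiprod Q ⟶ RepBiprod Q) where
  obj F :=
    { carrier := RepBiprod Q ⟶ F
      act := fun γ a => a ≫ γ
      act_one := fun γ => Category.id_comp γ
      act_mul := fun γ a b => by
        show (a * b) ≫ γ = b ≫ a ≫ γ
        rw [Quantaloid.end_mul_def, Category.assoc]
      sSup_act := fun s a => Quantaloid.comp_sSup a s
      act_sSup := fun γ s => Quantaloid.sSup_comp s γ }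
  map {F G} β :=
    ⟨fun γ => γ ≫ β, by
      constructor
      · intro s
        exact Quantaloid.sSup_comp s β
      · intro γ a
        exact Category.assoc a γ β⟩
  map_id F := Subtype.ext (funext fun γ => Category.comp_id γ)
  map_comp {F G H} α β := Subtype.ext (funext fun γ => (Category.assoc γ α β).symm)

instance : Functor.Faithful (PhiF (Q := Q)) where
  map_injective {F G} := by
    intro β β' hh
    apply slHom_ext
    intro X x
    have h1 : alphaN F x ≫ β = alphaN F x ≫ β' :=
      congrFun (congrArg Subtype.val hh) (alphaN F x)
    have h2 := congrFun (congrFun (congrArg Subtype.val h1) X) (uE X)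
    simpa [slComp_apply, alphaN_eval] using h2

instance : Functor.Full (PhiF (Q := Q)) where
  map_surjective {F G} φ := by
    refine ⟨⟨fun X x => (φ.1 (alphaN F x)).1 X (uE X), ?_, ?_⟩, ?_⟩
    · intro X s
      show (φ.1 (alphaN F (sSup s))).1 X (uE X) = ⨆ x ∈ s, (φ.1 (alphaN F x)).1 X (uE X)
      rw [alphaN_sSup]
      erw [show φ.1 (⨆ x ∈ s, alphaN F x) = ⨆ x ∈ s, φ.1 (alphaN F x) by
        simp only [QMod.hom_iSup]; exact iSup_congr fun x => QMod.hom_iSup φ _]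
      exact (slHom_iSup_apply _ X (uE X)).trans
        (iSup_congr fun x => slHom_iSup_apply _ X (uE X))
    · intro X Y f x
      show (φ.1 (alphaN F (F.map f x))).1 Y (uE Y) = G.map f ((φ.1 (alphaN F x)).1 X (uE X))
      rw [alphaN_map]
      rw [show φ.1 (eE f ≫ alphaN F x) = eE f ≫ φ.1 (alphaN F x) from
        φ.2.2 (alphaN F x) (eE f)]
      erw [slComp_apply, eE_uE]
      exact (φ.1 (alphaN F x)).2.2 f (uE X)
    · apply Subtype.ext
      funext γ
      apply slHom_ext
      intro W h
      show (φ.1 (alphaN F (γ.1 W h))).1 W (uE W) = (φ.1 γ).1 W h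
      erw [alphaN_gamma]
      rw [show φ.1 (aE h ≫ γ) = aE h ≫ φ.1 γ from φ.2.2 γ (aE h)]
      erw [slComp_apply, aE_uE]

/-- The unit map `M ⟶ Hom(P, Ψ M)`. -/
def theta : M.carrier → (RepBiprod Q ⟶ PsiF M) := fun m =>
  ⟨fun W h => ⟨M.act m (aE h), by
      rw [← M.act_mul, Quantaloid.end_mul_def, eId_comp_aE]⟩, by
    constructor
    · intro W s
      apply Subtype.ext
      show M.act m (aE (sSup s)) = _
      rw [aE_sSup]
      simp only [M.act_iSup, psiVal_iSup]
      exact iSup_congr fun i => by erw [psiVal_iSup]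
    · intro W W' g h
      apply Subtype.ext
      show M.act m (aE ((RepBiprod Q).map g h)) = M.act (M.act m (aE h)) (eE g)
      rw [aE_map, ← Quantaloid.end_mul_def, M.act_mul]⟩

lemma theta_isHom : QMod.IsHom M ((PhiF (Q := Q)).obj (PsiF M)) (theta M) := by
  constructor
  · intro s
    apply slHom_ext
    intro W h
    apply Subtype.ext
    show M.act (sSup s) (aE h) = (((⨆ m ∈ s, theta M m).1 W h).val)
    rw [M.sSup_act]
    rw [show (⨆ m ∈ s, theta M m).1 W h = ⨆ m ∈ s, (theta M m).1 W h by
      simp only [slHom_iSup_apply]]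
    simp only [psiVal_iSup]
    rfl
  · intro m a
    apply slHom_ext
    intro W h
    apply Subtype.ext
    show M.act (M.act m a) (aE h) = (((a ≫ theta M m).1 W h).val)
    rw [slComp_apply]
    show _ = M.act m (aE (a.1 W h))
    rw [aE_nat, ← Quantaloid.end_mul_def, M.act_mul]

/-- The counit map `Hom(P, Ψ M) ⟶ M`. -/
def rho : (RepBiprod Q ⟶ PsiF M) → M.carrier := fun γ => ⨆ X : Q, (γ.1 X (uE X)).val

lemma rho_theta (m : M.carrier) : rho M (theta M m) = m := by
  show (⨆ X : Q, M.act m (aE (uE X))) = m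
  rw [← M.act_iSup, iSup_aE_uE]
  exact M.act_one m

lemma theta_rho (γ : RepBiprod Q ⟶ PsiF M) : theta M (rho M γ) = γ := by
  apply slHom_ext
  intro W h
  apply Subtype.ext
  show M.act (⨆ X : Q, (γ.1 X (uE X)).val) (aE h) = (γ.1 W h).val
  rw [M.iSup_act]
  have key : ∀ X : Q,
      M.act (γ.1 X (uE X)).val (aE h) = M.act (γ.1 X (uE X)).val (eE (h X)) := by
    intro X
    have fx : M.act (γ.1 X (uE X)).val (eE (𝟙 X)) = (γ.1 X (uE X)).val :=
      (γ.1 X (uE X)).2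
    conv_lhs => rw [← fx]
    conv_rhs => rw [← fx]
    rw [← M.act_mul, ← M.act_mul, Quantaloid.end_mul_def, Quantaloid.end_mul_def,
      aE_comp_eId]
  calc (⨆ X : Q, M.act (γ.1 X (uE X)).val (aE h))
      = ⨆ X : Q, M.act (γ.1 X (uE X)).val (eE (h X)) := iSup_congr key
    _ = ⨆ X : Q, (γ.1 W ((RepBiprod Q).map (h X) (uE X))).val :=
        iSup_congr fun X => by rw [γ.2.2 (h X) (uE X)]; rfl
    _ = (γ.1 W h).val := by
        erw [← fixVal_iSup, ← slNat_iSup γ W, ← decompRB]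

lemma theta_inj : Function.Injective (theta M) :=
  Function.LeftInverse.injective (rho_theta M)

lemma theta_iSup {ι : Sort w} (g : ι → M.carrier) :
    theta M (⨆ i, g i) = ⨆ i, theta M (g i) :=
  QMod.hom_iSup (⟨theta M, theta_isHom M⟩ : M ⟶ (PhiF (Q := Q)).obj (PsiF M)) g

lemma rho_isHom : QMod.IsHom ((PhiF (Q := Q)).obj (PsiF M)) M (rho M) := by
  constructor
  · intro s
    apply theta_inj M
    erw [theta_rho]
    simp only [theta_iSup, theta_rho]
    exact sSup_eq_iSup.trans (iSup_congr fun i => iSup_congr fun _ => (theta_rho M i).symm)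
  · intro γ a
    apply theta_inj M
    erw [theta_rho, (theta_isHom M).2 (rho M γ) a, theta_rho]

instance : Functor.EssSurj (PhiF (Q := Q)) where
  mem_essImage M := ⟨PsiF M, ⟨{
    hom := ⟨rho M, rho_isHom M⟩
    inv := ⟨theta M, theta_isHom M⟩
    hom_inv_id := Subtype.ext (funext fun γ => theta_rho M γ)
    inv_hom_id := Subtype.ext (funext fun m => rho_theta M m) }⟩⟩

instance : Functor.IsEquivalence (PhiF (Q := Q)) := {}

end S5

/-- for a small quantaloid `Q`, the category of `Sl`-functors and
`Sl`-natural transformations from `Q` to `Sl` is equivalent to a category of modules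
over a quantale; explicitly, one may take the quantale to be the endomorphism
quantale of the biproduct `⊕_{X ∈ Q} Q(X,-)` of the representable `Sl`-functors. -/
theorem slFunctor_category_equiv_modules :
    (∃ (E : Type u) (_ : UQuantale E), Nonempty (SlFunctor Q ≌ QMod.{u, u} E)) ∧
    Nonempty (SlFunctor Q ≌ QMod.{u, u} (RepBiprod Q ⟶ RepBiprod Q)) := by
  constructor
  · exact ⟨RepBiprod Q ⟶ RepBiprod Q, inferInstance,
      ⟨(S5.PhiF (Q := Q)).asEquivalence⟩⟩
  · exact ⟨(S5.PhiF (Q := Q)).asEquivalence⟩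

end Statement5
end

section
/- Let A be a quantale and let Q be a projective generator in the category Mod_A(Sl) of right A-modules. Then the quantales A and Hom_A(Q,Q) are Morita equivalent, where Hom_A(Q,Q) is the endomorphism quantale of Q (the sup-lattice of A-module endomorphisms of Q with pointwise suprema, composition as multiplication, and the identity as unit). -/
open CategoryTheory Set

universe u v w

namespace MoritaAux
open QMod UQuantale

variable {A : Type u} [UQuantale A]

theorem qmul_le_mul_left (a : A) {x y : A} (h : x ≤ y) : a * x ≤ a * y := by
  have h2 : a * (x ⊔ y) = a * x ⊔ a * y := by
    have := UQuantale.mul_sSup a {x, y}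
    simpa only [sSup_pair, iSup_insert, iSup_singleton] using this
  rw [sup_eq_right.mpr h] at h2
  exact h2 ▸ le_sup_left

theorem qmul_le_mul_right {x y : A} (h : x ≤ y) (a : A) : x * a ≤ y * a := by
  have h2 : (x ⊔ y) * a = x * a ⊔ y * a := by
    have := UQuantale.sSup_mul {x, y} a
    simpa only [sSup_pair, iSup_insert, iSup_singleton] using this
  rw [sup_eq_right.mpr h] at h2
  exact h2 ▸ le_sup_left

theorem hom_mono {M N : QMod.{u, v} A} (f : M ⟶ N) : Monotone f.1 := by
  intro x y h
  have h2 : f.1 (x ⊔ y) = f.1 x ⊔ f.1 y := by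
    have := f.2.1 {x, y}
    simpa only [sSup_pair, iSup_insert, iSup_singleton] using this
  rw [sup_eq_right.mpr h] at h2
  exact h2 ▸ le_sup_left

theorem hom_bot {M N : QMod.{u, v} A} (f : M ⟶ N) : f.1 ⊥ = ⊥ := by
  have := f.2.1 ∅
  simpa using this

theorem act_bot (M : QMod.{u, v} A) (m : M.carrier) : M.act m ⊥ = ⊥ := by
  have := M.act_sSup m ∅
  simpa using this

/-- `A` as a right module over itself. -/
@[reducible] def Amod (A : Type u) [UQuantale A] : QMod.{u, u} A where
  carrier := A
  latt := inferInstance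
  act m a := m * a
  act_one := mul_one
  act_mul m a b := (mul_assoc m a b).symm
  sSup_act := UQuantale.sSup_mul
  act_sSup := UQuantale.mul_sSup

/-- The left residual: largest `x` with `b * x ≤ c`. -/
def ldiv (b c : A) : A := sSup {x | b * x ≤ c}

theorem le_ldiv_iff {b c x : A} : x ≤ ldiv b c ↔ b * x ≤ c := by
  constructor
  · intro h
    calc b * x ≤ b * ldiv b c := qmul_le_mul_left b h
      _ = ⨆ y ∈ {x | b * x ≤ c}, b * y := UQuantale.mul_sSup b _
      _ ≤ c := iSup₂_le fun y hy => hy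
  · exact fun h => le_sSup h

theorem ldiv_one_left (c : A) : ldiv 1 c = c := by
  apply le_antisymm
  · exact sSup_le fun x hx => by simpa using hx
  · exact le_sSup (by simp [ldiv])

theorem ldiv_mul (a b c : A) : ldiv (a * b) c = ldiv b (ldiv a c) := by
  apply le_antisymm
  · rw [le_ldiv_iff, le_ldiv_iff, ← mul_assoc, ← le_ldiv_iff]
  · rw [le_ldiv_iff, mul_assoc, ← le_ldiv_iff, ← le_ldiv_iff]

theorem ldiv_sInf (a : A) (T : Set A) : ldiv a (sInf T) = ⨅ c ∈ T, ldiv a c := by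
  refine le_antisymm (le_iInf₂ fun c hc => ?_) ?_
  · rw [le_ldiv_iff]
    exact le_trans (le_ldiv_iff.mp le_rfl) (sInf_le hc)
  · rw [le_ldiv_iff]
    rw [le_sInf_iff]
    intro c hc
    rw [← le_ldiv_iff]
    exact le_trans (iInf₂_le c hc) le_rfl

theorem sSup_ldiv (s : Set A) (c : A) : ldiv (sSup s) c = ⨅ a ∈ s, ldiv a c := by
  refine le_antisymm (le_iInf₂ fun a ha => ?_) ?_
  · rw [le_ldiv_iff]
    exact le_trans (qmul_le_mul_right (le_sSup ha) _) (le_ldiv_iff.mp le_rfl)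
  · rw [le_ldiv_iff, UQuantale.sSup_mul]
    refine iSup₂_le fun a ha => ?_
    rw [← le_ldiv_iff]
    exact iInf₂_le a ha

/-- The order-dual of `A` as a right `A`-module via left residuation. -/
@[reducible] def Adual (A : Type u) [UQuantale A] : QMod.{u, u} A where
  carrier := Aᵒᵈ
  latt := inferInstance
  act c b := OrderDual.toDual (ldiv b (OrderDual.ofDual c))
  act_one c := by
    simp [ldiv_one_left]
  act_mul c a b := by
    simp [ldiv_mul]
  sSup_act s a := by
    rw [show (⨆ c ∈ s, OrderDual.toDual (ldiv a (OrderDual.ofDual c)) : Aᵒᵈ)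
        = OrderDual.toDual (⨅ c ∈ s, ldiv a (OrderDual.ofDual c)) from rfl]
    congr 1
    rw [ofDual_sSup, ldiv_sInf]
    apply le_antisymm
    · exact le_iInf₂ fun c hc => iInf₂_le (OrderDual.ofDual c) hc
    · exact le_iInf₂ fun b hb => iInf₂_le (OrderDual.toDual b) hb
  act_sSup c s := by
    rw [show (⨆ a ∈ s, OrderDual.toDual (ldiv a (OrderDual.ofDual c)) : Aᵒᵈ)
        = OrderDual.toDual (⨅ a ∈ s, ldiv a (OrderDual.ofDual c)) from rfl]
    congr 1
    exact sSup_ldiv s _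

/-- The underlying function of `chi`. -/
def chiFun (c : A) : A → Aᵒᵈ := fun n => OrderDual.toDual (ldiv n c)

/-- The morphism `n ↦ c/n` from `A` to its dual module. -/
def chi (c : A) : Amod A ⟶ Adual A := by
  refine ⟨chiFun c, ?_, ?_⟩
  · intro s
    show chiFun c (sSup s) = ⨆ m ∈ s, chiFun c m
    rw [show (⨆ n ∈ s, chiFun c n : Aᵒᵈ)
        = OrderDual.toDual (⨅ n ∈ s, ldiv n c) from rfl]
    exact congrArg OrderDual.toDual (sSup_ldiv s c)
  · intro n a
    exact congrArg OrderDual.toDual (ldiv_mul n a c)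

variable (Q : QMod.{u, u} A)

/-- Index type for the trace identity. -/
@[reducible] def TrIdx : Type u := {p : (Q ⟶ Amod A) × Q.carrier // p.1.1 p.2 ≤ 1}

/-- The trace identity obtained from `Q` being a generator. -/
theorem trace_one (hgen : QMod.IsGenerator Q) :
    (⨆ p : TrIdx Q, p.1.1.1 p.1.2) = 1 := by
  set c' := ⨆ p : TrIdx Q, p.1.1.1 p.1.2 with hc'
  have hch : chi (A := A) 1 = chi c' := by
    apply hgen
    intro h
    apply Subtype.ext
    funext q
    show chiFun 1 (h.1 q) = chiFun c' (h.1 q)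
    unfold chiFun ldiv
    apply congrArg
    apply congrArg sSup
    ext x
    constructor
    · intro hx
      have hx' : h.1 q * x = h.1 (Q.act q x) := (h.2.2 q x).symm
      have hmem : h.1 (Q.act q x) ≤ 1 := hx' ▸ hx
      have : h.1 (Q.act q x) ≤ c' :=
        le_iSup (fun p : TrIdx Q => p.1.1.1 p.1.2) ⟨(h, Q.act q x), hmem⟩
      show h.1 q * x ≤ c'
      rw [hx']
      exact this
    · intro hx
      have hc'le : c' ≤ 1 := iSup_le fun p => p.2
      exact le_trans hx hc'le
  have h2 := congrArg (fun f => OrderDual.ofDual (f.1 (1 : A))) hch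
  simp only [chi, chiFun, OrderDual.ofDual_toDual, ldiv_one_left] at h2
  exact h2.symm

/-- The coproduct of `Q.carrier` many copies of `A`, as a module. -/
@[reducible] def PiMod : QMod.{u, u} A where
  carrier := Q.carrier → A
  latt := inferInstance
  act e a := fun x => e x * a
  act_one e := funext fun _ => mul_one _
  act_mul e a b := funext fun _ => (mul_assoc _ _ _).symm
  sSup_act s a := funext fun x => by
    simp only [sSup_apply, iSup_apply, UQuantale.iSup_mul, iSup_subtype]
  act_sSup e s := funext fun x => by
    simp only [iSup_apply, UQuantale.mul_sSup]

/-- The canonical morphism from the free module onto `Q`. -/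
def pi0 : PiMod Q ⟶ Q := by
  refine ⟨fun e => ⨆ x, Q.act x (e x), ?_, ?_⟩
  · intro s
    calc (⨆ x, Q.act x (sSup s x))
        = ⨆ x, ⨆ e ∈ s, Q.act x (e x) := by
          refine iSup_congr fun x => ?_
          rw [show sSup s x = ⨆ e ∈ s, (e : Q.carrier → A) x by
            simp only [sSup_apply, iSup_apply, iSup_subtype]]
          simp only [QMod.act_iSup]
      _ = ⨆ e ∈ s, ⨆ x, Q.act x (e x) := by
          rw [iSup_comm]
          exact iSup_congr fun e => iSup_comm
  · intro e a
    calc (⨆ x, Q.act x (e x * a))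
        = ⨆ x, Q.act (Q.act x (e x)) a := by
          exact iSup_congr fun x => Q.act_mul x (e x) a
      _ = Q.act (⨆ x, Q.act x (e x)) a := (Q.iSup_act _ a).symm

theorem pi0_epi : Epi (pi0 Q) := by
  constructor
  intro Z g h w
  apply Subtype.ext
  funext q
  classical
  let e : Q.carrier → A := fun x => if x = q then 1 else ⊥
  have he : (pi0 Q).1 e = q := by
    apply le_antisymm
    · refine iSup_le fun x => ?_
      by_cases hx : x = q
      · subst hx; simp [e, Q.act_one]
      · simp [e, hx, act_bot]
    · calc q = Q.act q 1 := (Q.act_one q).symm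
        _ = Q.act q (e q) := by simp [e]
        _ ≤ ⨆ x, Q.act x (e x) := le_iSup (fun x => Q.act x (e x)) q
  have hw := congrArg (fun f => f.1 e) w
  show g.1 q = h.1 q
  rw [← he]
  exact hw

section DualBasis

variable (k : Q ⟶ PiMod Q)

/-- The dual-basis functionals `Q → A`. -/
def sel (x : Q.carrier) : Q ⟶ Amod A := by
  refine ⟨fun q => k.1 q x, ?_, ?_⟩
  · intro s
    show k.1 (sSup s) x = ⨆ m ∈ s, k.1 m x
    rw [k.2.1 s]
    simp only [iSup_apply]
  · intro m a
    show k.1 (Q.act m a) x = k.1 m x * a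
    rw [k.2.2 m a]

end DualBasis

/-- `Hom_A(Q, M)` as a right module over the endomorphism quantale `Q ⟶ Q`. -/
@[reducible] def Fobj (M : QMod.{u, u} A) : QMod.{u, u} (Q ⟶ Q) where
  carrier := Q ⟶ M
  latt := inferInstance
  act h b := b ≫ h
  act_one h := Subtype.ext rfl
  act_mul h b b' := Subtype.ext rfl
  sSup_act s b := by
    apply Subtype.ext
    funext q
    show (sSup s).1 (b.1 q) = (⨆ h ∈ s, b ≫ h).1 q
    rw [sSup_hom_apply]
    simp only [iSup_hom_apply]
    rfl
  act_sSup h s := by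
    apply Subtype.ext
    funext q
    show h.1 ((sSup s).1 q) = (⨆ b ∈ s, b ≫ h).1 q
    rw [sSup_hom_apply]
    simp only [hom_iSup, iSup_hom_apply]
    rfl

/-- Post-composition on hom-modules. -/
def Fmap {M N : QMod.{u, u} A} (f : M ⟶ N) : Fobj Q M ⟶ Fobj Q N := by
  refine ⟨fun h => h ≫ f, ?_, ?_⟩
  · intro s
    apply Subtype.ext
    funext q
    show f.1 ((sSup s).1 q) = (⨆ h ∈ s, h ≫ f).1 q
    rw [sSup_hom_apply]
    simp only [hom_iSup, iSup_hom_apply]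
    rfl
  · intro h b
    exact Subtype.ext rfl

/-- The functor `Hom_A(Q, −) : Mod_A ⥤ Mod_{End(Q)}`. -/
def Ffun : QMod.{u, u} A ⥤ QMod.{u, u} (Q ⟶ Q) where
  obj := Fobj Q
  map := Fmap Q
  map_id M := Subtype.ext (funext fun h => Subtype.ext rfl)
  map_comp f g := Subtype.ext (funext fun h => Subtype.ext rfl)

theorem Ffun_faithful (hgen : QMod.IsGenerator Q) : (Ffun Q).Faithful := by
  constructor
  intro M N f g hfg
  exact hgen f g fun h => congrFun (congrArg Subtype.val hfg) h

section Full

variable {M N : QMod.{u, u} A}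

/-- The morphism `q ↦ m · g q` in `Hom_A(Q, M)`. -/
def hmg (m : M.carrier) (g : Q ⟶ Amod A) : Q ⟶ M := by
  refine ⟨fun q => M.act m (g.1 q), ?_, ?_⟩
  · intro s
    show M.act m (g.1 (sSup s)) = _
    rw [g.2.1 s]
    simp only [QMod.act_iSup]
  · intro q a
    show M.act m (g.1 (Q.act q a)) = M.act (M.act m (g.1 q)) a
    rw [g.2.2 q a]
    exact M.act_mul m (g.1 q) a

/-- The endomorphism `y ↦ q · g y` of `Q`. -/
def theta (q : Q.carrier) (g : Q ⟶ Amod A) : Q ⟶ Q := hmg Q q g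

theorem hmg_comp (h : Q ⟶ M) (q0 : Q.carrier) (g : Q ⟶ Amod A) :
    hmg Q (h.1 q0) g = (theta Q q0 g) ≫ h :=
  Subtype.ext (funext fun y => (h.2.2 q0 (g.1 y)).symm)

variable (φ : Fobj Q M ⟶ Fobj Q N)

/-- The underlying function of the inverse image of `φ` under `Hom_A(Q,−)`. -/
def Ff : M.carrier → N.carrier :=
  fun m => ⨆ p : TrIdx Q, (φ.1 (hmg Q m p.1.1)).1 p.1.2

theorem Ff_sSup (s : Set M.carrier) : Ff Q φ (sSup s) = ⨆ m ∈ s, Ff Q φ m := by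
  have h1 : ∀ g : Q ⟶ Amod A, hmg Q (sSup s) g = ⨆ m ∈ s, hmg Q m g := by
    intro g
    apply Subtype.ext
    funext y
    show M.act (sSup s) (g.1 y) = _
    rw [M.sSup_act s (g.1 y)]
    simp only [iSup_hom_apply]
    rfl
  unfold Ff
  calc (⨆ p : TrIdx Q, (φ.1 (hmg Q (sSup s) p.1.1)).1 p.1.2)
      = ⨆ p : TrIdx Q, ⨆ m ∈ s, (φ.1 (hmg Q m p.1.1)).1 p.1.2 := by
        refine iSup_congr fun p => ?_
        rw [h1 p.1.1]
        simp only [hom_iSup φ, iSup_hom_apply]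
    _ = ⨆ m ∈ s, ⨆ p : TrIdx Q, (φ.1 (hmg Q m p.1.1)).1 p.1.2 := by
        rw [iSup_comm]
        exact iSup_congr fun m => iSup_comm

theorem Ff_iSup {ι : Sort w} (u : ι → M.carrier) :
    Ff Q φ (⨆ i, u i) = ⨆ i, Ff Q φ (u i) := by
  rw [iSup, Ff_sSup]
  exact iSup_range

theorem Ff_apply_hom (htr : (⨆ p : TrIdx Q, p.1.1.1 p.1.2) = 1)
    (h : Q ⟶ M) (q0 : Q.carrier) : Ff Q φ (h.1 q0) = (φ.1 h).1 q0 := by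
  unfold Ff
  calc (⨆ p : TrIdx Q, (φ.1 (hmg Q (h.1 q0) p.1.1)).1 p.1.2)
      = ⨆ p : TrIdx Q, (φ.1 h).1 (Q.act q0 (p.1.1.1 p.1.2)) := by
        refine iSup_congr fun p => ?_
        rw [hmg_comp]
        have hφ := φ.2.2 h (theta Q q0 p.1.1)
        have : φ.1 ((Fobj Q M).act h (theta Q q0 p.1.1))
            = (theta Q q0 p.1.1) ≫ (φ.1 h) := hφ
        rw [show (theta Q q0 p.1.1) ≫ h = (Fobj Q M).act h (theta Q q0 p.1.1) from rfl, this]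
        rfl
    _ = (φ.1 h).1 (Q.act q0 (⨆ p : TrIdx Q, p.1.1.1 p.1.2)) := by
        rw [Q.act_iSup, hom_iSup]
    _ = (φ.1 h).1 q0 := by rw [htr, Q.act_one]

theorem m_repr (htr : (⨆ p : TrIdx Q, p.1.1.1 p.1.2) = 1) (m : M.carrier) :
    (⨆ p : TrIdx Q, (hmg Q m p.1.1).1 p.1.2) = m := by
  calc (⨆ p : TrIdx Q, M.act m (p.1.1.1 p.1.2))
      = M.act m (⨆ p : TrIdx Q, p.1.1.1 p.1.2) := (M.act_iSup m _).symm
    _ = m := by rw [htr, M.act_one]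

theorem Ff_act (htr : (⨆ p : TrIdx Q, p.1.1.1 p.1.2) = 1) (m : M.carrier) (a : A) :
    Ff Q φ (M.act m a) = N.act (Ff Q φ m) a := by
  have h1 : M.act m a = ⨆ p : TrIdx Q, (hmg Q m p.1.1).1 (Q.act p.1.2 a) := by
    calc M.act m a = M.act (⨆ p : TrIdx Q, (hmg Q m p.1.1).1 p.1.2) a := by
          rw [m_repr Q htr]
      _ = ⨆ p : TrIdx Q, M.act ((hmg Q m p.1.1).1 p.1.2) a := M.iSup_act _ a
      _ = ⨆ p : TrIdx Q, (hmg Q m p.1.1).1 (Q.act p.1.2 a) := by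
          exact iSup_congr fun p => ((hmg Q m p.1.1).2.2 p.1.2 a).symm
  rw [h1, Ff_iSup]
  calc (⨆ p : TrIdx Q, Ff Q φ ((hmg Q m p.1.1).1 (Q.act p.1.2 a)))
      = ⨆ p : TrIdx Q, (φ.1 (hmg Q m p.1.1)).1 (Q.act p.1.2 a) := by
        exact iSup_congr fun p => Ff_apply_hom Q φ htr (hmg Q m p.1.1) (Q.act p.1.2 a)
    _ = ⨆ p : TrIdx Q, N.act ((φ.1 (hmg Q m p.1.1)).1 p.1.2) a := by
        exact iSup_congr fun p => (φ.1 (hmg Q m p.1.1)).2.2 p.1.2 a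
    _ = N.act (⨆ p : TrIdx Q, (φ.1 (hmg Q m p.1.1)).1 p.1.2) a := (N.iSup_act _ a).symm
    _ = N.act (Ff Q φ m) a := rfl

/-- The inverse image of `φ` under `Hom_A(Q,−)`. -/
def Ffmor (htr : (⨆ p : TrIdx Q, p.1.1.1 p.1.2) = 1) : M ⟶ N :=
  ⟨Ff Q φ, Ff_sSup Q φ, Ff_act Q φ htr⟩

end Full

theorem Ffun_full (htr : (⨆ p : TrIdx Q, p.1.1.1 p.1.2) = 1) : (Ffun Q).Full := by
  constructor
  intro M N φ
  refine ⟨Ffmor Q φ htr, ?_⟩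
  apply Subtype.ext
  funext h
  apply Subtype.ext
  funext q
  exact Ff_apply_hom Q φ htr h q

section EssSurj

/-- Left multiplication on `Hom_A(Q, A)`. -/
def asmul (a : A) (g : Q ⟶ Amod A) : Q ⟶ Amod A := hmg Q (M := Amod A) a g

theorem asmul_sSup (a : A) (S : Set (Q ⟶ Amod A)) :
    asmul Q a (sSup S) = ⨆ g ∈ S, asmul Q a g := by
  apply Subtype.ext
  funext q
  show a * (sSup S).1 q = (⨆ g ∈ S, asmul Q a g).1 q
  rw [sSup_hom_apply]
  simp only [iSup_hom_apply, UQuantale.mul_iSup]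
  rfl

theorem asmul_comp (a : A) (g : Q ⟶ Amod A) (b : Q ⟶ Q) :
    asmul Q a (b ≫ g) = b ≫ asmul Q a g :=
  Subtype.ext rfl

theorem sSup_asmul (S : Set A) (g : Q ⟶ Amod A) :
    asmul Q (sSup S) g = ⨆ a ∈ S, asmul Q a g := by
  apply Subtype.ext
  funext q
  show (sSup S) * g.1 q = (⨆ a ∈ S, asmul Q a g).1 q
  rw [UQuantale.sSup_mul]
  simp only [iSup_hom_apply]
  rfl

/-- `Hom_B(Hom_A(Q,A), N)` as a right `A`-module. -/
@[reducible] def Gobj (N : QMod.{u, u} (Q ⟶ Q)) : QMod.{u, u} A where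
  carrier := Fobj Q (Amod A) ⟶ N
  latt := inferInstance
  act F a := by
    refine ⟨fun g => F.1 (asmul Q a g), ?_, ?_⟩
    · intro S
      show F.1 (asmul Q a (sSup S)) = _
      rw [asmul_sSup]
      simp only [hom_iSup F]
    · intro g b
      show F.1 (asmul Q a ((Fobj Q (Amod A)).act g b)) = N.act (F.1 (asmul Q a g)) b
      rw [show (Fobj Q (Amod A)).act g b = b ≫ g from rfl, asmul_comp]
      exact F.2.2 (asmul Q a g) b
  act_one F := Subtype.ext (funext fun g =>
    congrArg F.1 (Subtype.ext (funext fun q => one_mul (g.1 q))))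
  act_mul F a a' := Subtype.ext (funext fun g =>
    congrArg F.1 (Subtype.ext (funext fun q => mul_assoc a a' (g.1 q))))
  sSup_act S a := by
    apply Subtype.ext
    funext g
    show (sSup S).1 (asmul Q a g) = _
    rw [sSup_hom_apply]
    conv_rhs => rw [← sSup_image]
    rw [sSup_hom_apply, iSup_image]
  act_sSup F S := by
    apply Subtype.ext
    funext g
    show F.1 (asmul Q (sSup S) g) = _
    rw [sSup_asmul]
    simp only [hom_iSup F]
    conv_rhs => rw [← sSup_image]
    rw [sSup_hom_apply, iSup_image]

variable (k : Q ⟶ PiMod Q)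

theorem theta_sel_one (hdb : ∀ q, (⨆ x, Q.act x (k.1 q x)) = q) :
    (⨆ x, theta Q x (sel Q k x)) = (1 : Q ⟶ Q) := by
  apply Subtype.ext
  funext y
  rw [iSup_hom_apply]
  exact hdb y

theorem theta_comp_sel (x q : Q.carrier) (g : Q ⟶ Amod A) :
    theta Q q g ≫ sel Q k x = asmul Q ((sel Q k x).1 q) g := by
  apply Subtype.ext
  funext y
  show (sel Q k x).1 (Q.act q (g.1 y)) = (sel Q k x).1 q * g.1 y
  exact (sel Q k x).2.2 q (g.1 y)

theorem theta_mul (b : Q ⟶ Q) (q : Q.carrier) (g : Q ⟶ Amod A) :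
    b * theta Q q g = theta Q (b.1 q) g := by
  apply Subtype.ext
  funext y
  show b.1 (Q.act q (g.1 y)) = Q.act (b.1 q) (g.1 y)
  exact b.2.2 q (g.1 y)

theorem theta_mul_right (q : Q.carrier) (g : Q ⟶ Amod A) (b : Q ⟶ Q) :
    theta Q q g * b = theta Q q (b ≫ g) :=
  Subtype.ext rfl

theorem theta_sSup_g (q : Q.carrier) (S : Set (Q ⟶ Amod A)) :
    theta Q q (sSup S) = ⨆ g ∈ S, theta Q q g := by
  apply Subtype.ext
  funext y
  show Q.act q ((sSup S).1 y) = _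
  rw [sSup_hom_apply]
  simp only [QMod.act_iSup, iSup_hom_apply]
  rfl

theorem sSup_theta (s : Set Q.carrier) (g : Q ⟶ Amod A) :
    theta Q (sSup s) g = ⨆ q ∈ s, theta Q q g := by
  apply Subtype.ext
  funext y
  show Q.act (sSup s) (g.1 y) = _
  rw [Q.sSup_act]
  simp only [iSup_hom_apply]
  rfl

variable (N : QMod.{u, u} (Q ⟶ Q))

/-- The element of `Gobj N` given by `n` and `q`. -/
def Fnq (n : N.carrier) (q : Q.carrier) : (Gobj Q N).carrier := by
  refine ⟨fun g => N.act n (theta Q q g), ?_, ?_⟩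
  · intro S
    show N.act n (theta Q q (sSup S)) = _
    rw [theta_sSup_g]
    simp only [QMod.act_iSup]
  · intro g b
    show N.act n (theta Q q ((Fobj Q (Amod A)).act g b)) = N.act (N.act n (theta Q q g)) b
    rw [show (Fobj Q (Amod A)).act g b = b ≫ g from rfl, ← theta_mul_right]
    exact N.act_mul n (theta Q q g) b

/-- The unit map `N → Hom_A(Q, Gobj N)`. -/
def alphaFn (n : N.carrier) : Q ⟶ Gobj Q N := by
  refine ⟨Fnq Q N n, ?_, ?_⟩
  · intro s
    apply Subtype.ext
    funext g
    show N.act n (theta Q (sSup s) g) = _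
    rw [sSup_theta]
    simp only [QMod.act_iSup, iSup_hom_apply]
    rfl
  · intro q a
    apply Subtype.ext
    funext g
    show N.act n (theta Q (Q.act q a) g) = N.act n (theta Q q (asmul Q a g))
    exact congrArg (N.act n) (Subtype.ext (funext fun y => (Q.act_mul q a (g.1 y)).symm))

/-- The counit `Hom_A(Q, Gobj N) → N`. -/
def betaMor (hdb : ∀ q, (⨆ x, Q.act x (k.1 q x)) = q) :
    Fobj Q (Gobj Q N) ⟶ N := by
  refine ⟨fun H => ⨆ x, (H.1 x).1 (sel Q k x), ?_, ?_⟩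
  · intro S
    calc (⨆ x, ((sSup S).1 x).1 (sel Q k x))
        = ⨆ x, ⨆ H ∈ S, (H.1 x).1 (sel Q k x) := by
          refine iSup_congr fun x => ?_
          rw [sSup_hom_apply]
          simp only [iSup_hom_apply]
      _ = ⨆ H ∈ S, ⨆ x, (H.1 x).1 (sel Q k x) := by
          rw [iSup_comm]
          exact iSup_congr fun H => iSup_comm
  · intro H b
    show (⨆ x, (((Fobj Q (Gobj Q N)).act H b).1 x).1 (sel Q k x))
        = N.act (⨆ x, (H.1 x).1 (sel Q k x)) b
    have stepA : ∀ z : Q.carrier,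
        H.1 z = ⨆ y, (Gobj Q N).act (H.1 y) ((sel Q k y).1 z) := by
      intro z
      conv_lhs => rw [← hdb z]
      rw [hom_iSup H]
      exact iSup_congr fun y => H.2.2 y ((sel Q k y).1 z)
    have stepB : ∀ y : Q.carrier,
        (⨆ x, asmul Q ((sel Q k y).1 (b.1 x)) (sel Q k x)) = b ≫ sel Q k y := by
      intro y
      apply Subtype.ext
      funext q
      rw [iSup_hom_apply]
      show (⨆ x, (sel Q k y).1 (b.1 x) * (sel Q k x).1 q) = (sel Q k y).1 (b.1 q)
      calc (⨆ x, (sel Q k y).1 (b.1 x) * (sel Q k x).1 q)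
          = ⨆ x, (sel Q k y).1 (b.1 (Q.act x ((sel Q k x).1 q))) := by
            refine iSup_congr fun x => ?_
            rw [b.2.2 x ((sel Q k x).1 q)]
            exact ((sel Q k y).2.2 (b.1 x) ((sel Q k x).1 q)).symm
        _ = (sel Q k y).1 (b.1 (⨆ x, Q.act x (k.1 q x))) := by
            rw [hom_iSup b, hom_iSup (sel Q k y)]
            exact rfl
        _ = (sel Q k y).1 (b.1 q) := by rw [hdb q]
    calc (⨆ x, (H.1 (b.1 x)).1 (sel Q k x))
        = ⨆ x, ⨆ y, (H.1 y).1 (asmul Q ((sel Q k y).1 (b.1 x)) (sel Q k x)) := by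
          refine iSup_congr fun x => ?_
          rw [stepA (b.1 x)]
          rw [iSup_hom_apply]
      _ = ⨆ y, ⨆ x, (H.1 y).1 (asmul Q ((sel Q k y).1 (b.1 x)) (sel Q k x)) := iSup_comm
      _ = ⨆ y, (H.1 y).1 (⨆ x, asmul Q ((sel Q k y).1 (b.1 x)) (sel Q k x)) := by
          exact iSup_congr fun y => (hom_iSup (H.1 y) _).symm
      _ = ⨆ y, (H.1 y).1 ((Fobj Q (Amod A)).act (sel Q k y) b) := by
          refine iSup_congr fun y => congrArg (H.1 y).1 ?_
          rw [stepB y]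
      _ = ⨆ y, N.act ((H.1 y).1 (sel Q k y)) b := by
          exact iSup_congr fun y => (H.1 y).2.2 (sel Q k y) b
      _ = N.act (⨆ y, (H.1 y).1 (sel Q k y)) b := (N.iSup_act _ b).symm

/-- The unit as a morphism of `B`-modules. -/
def alphaMor : N ⟶ Fobj Q (Gobj Q N) := by
  refine ⟨alphaFn Q N, ?_, ?_⟩
  · intro T
    apply Subtype.ext
    funext q
    apply Subtype.ext
    funext g
    show N.act (sSup T) (theta Q q g) = _
    rw [N.sSup_act]
    simp only [iSup_hom_apply]
    rfl
  · intro n b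
    apply Subtype.ext
    funext q
    apply Subtype.ext
    funext g
    show N.act (N.act n b) (theta Q q g) = N.act n (theta Q (b.1 q) g)
    rw [← theta_mul Q b q g, N.act_mul]

theorem beta_alpha (hdb : ∀ q, (⨆ x, Q.act x (k.1 q x)) = q) (n : N.carrier) :
    (betaMor Q k N hdb).1 ((alphaMor Q N).1 n) = n := by
  show (⨆ x, N.act n (theta Q x (sel Q k x))) = n
  rw [← QMod.act_iSup N n (fun x => theta Q x (sel Q k x)), theta_sel_one Q k hdb]
  exact N.act_one n

theorem alpha_beta (hdb : ∀ q, (⨆ x, Q.act x (k.1 q x)) = q)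
    (H : Q ⟶ Gobj Q N) :
    (alphaMor Q N).1 ((betaMor Q k N hdb).1 H) = H := by
  apply Subtype.ext
  funext q
  apply Subtype.ext
  funext g
  show N.act ((betaMor Q k N hdb).1 H) (theta Q q g) = (H.1 q).1 g
  calc N.act (⨆ x, (H.1 x).1 (sel Q k x)) (theta Q q g)
      = ⨆ x, N.act ((H.1 x).1 (sel Q k x)) (theta Q q g) := N.iSup_act _ _
    _ = ⨆ x, (H.1 x).1 ((Fobj Q (Amod A)).act (sel Q k x) (theta Q q g)) :=
        iSup_congr fun x => ((H.1 x).2.2 (sel Q k x) (theta Q q g)).symm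
    _ = ⨆ x, (H.1 x).1 (asmul Q ((sel Q k x).1 q) g) := by
        refine iSup_congr fun x => congrArg (H.1 x).1 ?_
        exact theta_comp_sel Q k x q g
    _ = ⨆ x, (H.1 (Q.act x ((sel Q k x).1 q))).1 g := by
        refine iSup_congr fun x => ?_
        show ((Gobj Q N).act (H.1 x) ((sel Q k x).1 q)).1 g = _
        rw [← H.2.2 x ((sel Q k x).1 q)]
    _ = (H.1 (⨆ x, Q.act x (k.1 q x))).1 g := by
        rw [hom_iSup H, iSup_hom_apply]
        exact rfl
    _ = (H.1 q).1 g := by rw [hdb q]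

/-- The counit isomorphism giving essential surjectivity. -/
def isoFG (hdb : ∀ q, (⨆ x, Q.act x (k.1 q x)) = q) :
    (Ffun Q).obj (Gobj Q N) ≅ N where
  hom := betaMor Q k N hdb
  inv := alphaMor Q N
  hom_inv_id := Subtype.ext (funext fun H => alpha_beta Q k N hdb H)
  inv_hom_id := Subtype.ext (funext fun n => beta_alpha Q k N hdb n)

end EssSurj

end MoritaAux

/-!
STATEMENT 7: If `Q` is a projective generator in the category of right `A`-modules,
then `A` and the endomorphism quantale `Hom_A(Q,Q)` are Morita equivalent.
-/
theorem morita_of_projective_generator (A : Type u) [UQuantale A] (Q : QMod.{u, u} A)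
    (hgen : QMod.IsGenerator Q) (hproj : QMod.IsProjective Q) :
    MoritaEquivalent A (Q ⟶ Q) := by
  obtain ⟨k, hk⟩ := hproj (MoritaAux.pi0 Q) (MoritaAux.pi0_epi Q) (𝟙 Q)
  have hdb : ∀ q, (⨆ x, Q.act x (k.1 q x)) = q := by
    intro q
    exact congrArg (fun f => f.1 q) hk
  have htr := MoritaAux.trace_one Q hgen
  haveI h1 : (MoritaAux.Ffun Q).Faithful := MoritaAux.Ffun_faithful Q hgen
  haveI h2 : (MoritaAux.Ffun Q).Full := MoritaAux.Ffun_full Q htr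
  haveI h3 : (MoritaAux.Ffun Q).EssSurj :=
    ⟨fun N => ⟨MoritaAux.Gobj Q N, ⟨MoritaAux.isoFG Q k N hdb⟩⟩⟩
  haveI h4 : (MoritaAux.Ffun Q).IsEquivalence := {}
  exact ⟨(MoritaAux.Ffun Q).asEquivalence⟩
end
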